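/- arXiv:1210.3847 — 4 statements merged into one kernel-verified Lean document; each statement's English description precedes it below -/
import Mathlib

section
/- Let A = k⟨a,b,c,d,e,f,l,m⟩/⟨bc−ef, ae, da−lm, cl⟩. Then the Yoneda algebra E(A) is not finitely generated as a k-algebra: for every i ≥ 3, the multiplication map ⊕_{0<j<i, 0<k<2i−2} E^{j,k}(A) ⊗ E^{i−j, 2i−k−2}(A) → E^{i,2i−2}(A) is zero while E^{i,2i−2}(A) ≠ 0. -/
/-
Common framework: connected graded algebras are presented as quotients of the
free (tensor) algebra `FreeAlgebra k X` on a (finite) generating set `X` placed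
in degree 1, by a set of homogeneous relations.  The (bigraded) Yoneda algebra
`E(R) = ⊕_{i,j} Ext_R^{i,j}(k,k)` of such an algebra is represented abstractly
by an ambient `k`-algebra `E` together with a bigraded family of subspaces
`ext : ℕ → ℕ → Submodule k E`, where `ext i j` stands for `Ext_R^{i,j}(k,k)`
(`i` = cohomological degree, `j` = internal degree).
-/

noncomputable section

/-- The monomial in the free algebra `T(V)` corresponding to a word `w` in the
fixed basis `X` of `V`. -/
def FreeMonomial (k : Type*) [CommSemiring k] {X : Type*} (w : List X) : FreeAlgebra k X :=
  (w.map (FreeAlgebra.ι k)).prod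

/-- The degree-`n` homogeneous component of the free algebra `T(V)`. -/
def homogComponent (k : Type*) [CommSemiring k] (X : Type*) (n : ℕ) :
    Submodule k (FreeAlgebra k X) :=
  Submodule.span k (FreeMonomial k '' {w : List X | w.length = n})

/-- The quotient of the free algebra by the two-sided ideal generated by `S`. -/
abbrev QuotAlg (k : Type*) [CommSemiring k] (X : Type*) (S : Set (FreeAlgebra k X)) : Type _ :=
  RingQuot (fun a b : FreeAlgebra k X => a ∈ S ∧ b = 0)

/-- A bigraded family `ext i j` (standing for `Ext^{i,j}(k,k)`) generates the
ambient algebra, as a `k`-algebra, in the cohomological degrees belonging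
to `S`. -/
def GeneratedInDegrees (k : Type*) [Field k] {E : Type*} [Ring E] [Algebra k E]
    (ext : ℕ → ℕ → Submodule k E) (S : Set ℕ) : Prop :=
  Algebra.adjoin k (⋃ i ∈ S, ⋃ j, (ext i j : Set E)) = ⊤

section CassidyPhanAlgebra

variable (k : Type) [Field k]

/-- Generators `a, b, c, d, e, f, l, m` are encoded as `0,…,7 : Fin 8`. -/
def relA : Set (FreeAlgebra k (Fin 8)) :=
  { FreeMonomial k [1, 2] - FreeMonomial k [4, 5],  -- bc - ef
    FreeMonomial k [0, 4],                          -- ae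
    FreeMonomial k [3, 0] - FreeMonomial k [6, 7],  -- da - lm
    FreeMonomial k [2, 6] }                         -- cl

/-- Theorem `answer1`, key part.
Let `A = k⟨a,b,c,d,e,f,l,m⟩/⟨bc−ef, ae, da−lm, cl⟩`, with Yoneda algebra
`E(A)` represented by the bigraded family `extA i j = Ext_A^{i,j}(k,k)` inside
the ambient algebra `EA`; by the minimal resolution of `k` over `A`, `Ext^i`
is concentrated in internal degree `i` for `i ≤ 1` and `2i−2` for `i ≥ 2`,
where it is 2-dimensional.  Then for every `i ≥ 3` the multiplication map
`⊕_{0<j<i, 0<l<2i−2} E^{j,l}(A) ⊗ E^{i−j,2i−l−2}(A) → E^{i,2i−2}(A)` is zero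
while `E^{i,2i−2}(A) ≠ 0`; hence `E(A)` is not finitely generated as a
`k`-algebra. -/
theorem yoneda_algebra_not_finitely_generated
    (A : Type) (hA : A = QuotAlg k (Fin 8) (relA k))
    (EA : Type) [Ring EA] [Algebra k EA] (extA : ℕ → ℕ → Submodule k EA)
    [GradedAlgebra (fun p : ℕ × ℕ => extA p.1 p.2)]
    (h0 : ∀ j, j ≠ 0 → extA 0 j = ⊥) (h1 : ∀ j, j ≠ 1 → extA 1 j = ⊥)
    (h2 : ∀ i j, 2 ≤ i → j ≠ 2 * i - 2 → extA i j = ⊥)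
    (hdim : ∀ i, 2 ≤ i → Module.finrank k (extA i (2 * i - 2)) = 2) :
    (∀ i, 3 ≤ i →
      (extA i (2 * i - 2) ≠ ⊥ ∧
       ∀ j l : ℕ, 0 < j → j < i → 0 < l → l < 2 * i - 2 →
         ∀ x ∈ extA j l, ∀ y ∈ extA (i - j) (2 * i - l - 2), x * y = 0)) ∧
    ¬ ∃ S : Set EA, S.Finite ∧ Algebra.adjoin k S = ⊤ := by
  classical
  -- nontriviality of the target pieces
  have hnb : ∀ i, 2 ≤ i → extA i (2 * i - 2) ≠ ⊥ := by
    intro i hi h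
    have hd := hdim i hi
    rw [h, finrank_bot] at hd
    exact two_ne_zero hd.symm
  -- the zero-product statement
  have hzero : ∀ i, 3 ≤ i → ∀ j l : ℕ, 0 < j → j < i → 0 < l → l < 2 * i - 2 →
      ∀ x ∈ extA j l, ∀ y ∈ extA (i - j) (2 * i - l - 2), x * y = 0 := by
    intro i hi j l hj hji hl hli x hx y hy
    rcases eq_or_ne j 1 with hj1 | hj1
    · subst hj1
      rcases eq_or_ne l 1 with hl1 | hl1
      · subst hl1
        have hb : extA (i - 1) (2 * i - 1 - 2) = ⊥ := h2 _ _ (by omega) (by omega)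
        rw [hb, Submodule.mem_bot] at hy
        rw [hy, mul_zero]
      · have hb : extA 1 l = ⊥ := h1 _ hl1
        rw [hb, Submodule.mem_bot] at hx
        rw [hx, zero_mul]
    · have hj2 : 2 ≤ j := by omega
      rcases eq_or_ne l (2 * j - 2) with hl2 | hl2
      · subst hl2
        rcases eq_or_ne (i - j) 1 with hij | hij
        · have hb : extA (i - j) (2 * i - (2 * j - 2) - 2) = ⊥ := by
            rw [hij]; exact h1 _ (by omega)
          rw [hb, Submodule.mem_bot] at hy
          rw [hy, mul_zero]
        · have hb : extA (i - j) (2 * i - (2 * j - 2) - 2) = ⊥ :=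
            h2 _ _ (by omega) (by omega)
          rw [hb, Submodule.mem_bot] at hy
          rw [hy, mul_zero]
      · have hb : extA j l = ⊥ := h2 _ _ hj2 hl2
        rw [hb, Submodule.mem_bot] at hx
        rw [hx, zero_mul]
  refine ⟨fun i hi => ⟨hnb i (by omega), hzero i hi⟩, ?_⟩
  rintro ⟨S, hSfin, hStop⟩
  -- classification of degrees supporting nonzero elements
  have hclass : ∀ i j (x : EA), x ∈ extA i j → x ≠ 0 →
      (i = 0 ∧ j = 0) ∨ (i = 1 ∧ j = 1) ∨ (2 ≤ i ∧ j = 2 * i - 2) := by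
    intro i j x hx hx0
    rcases Nat.lt_or_ge i 2 with hi | hi
    · interval_cases i
      · rcases eq_or_ne j 0 with h | h
        · exact Or.inl ⟨rfl, h⟩
        · rw [h0 j h, Submodule.mem_bot] at hx; exact absurd hx hx0
      · rcases eq_or_ne j 1 with h | h
        · exact Or.inr (Or.inl ⟨rfl, h⟩)
        · rw [h1 j h, Submodule.mem_bot] at hx; exact absurd hx hx0
    · rcases eq_or_ne j (2 * i - 2) with h | h
      · exact Or.inr (Or.inr ⟨hi, h⟩)
      · rw [h2 i j hi h, Submodule.mem_bot] at hx; exact absurd hx hx0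
  set 𝒜 : ℕ × ℕ → Submodule k EA := fun p => extA p.1 p.2 with h𝒜
  have hmul : ∀ (i1 j1 i2 j2 : ℕ) (x y : EA), x ∈ extA i1 j1 → y ∈ extA i2 j2 →
      x * y ∈ extA (i1 + i2) (j1 + j2) := by
    intro i1 j1 i2 j2 x y hx hy
    exact SetLike.mul_mem_graded (A := 𝒜) (i := (i1, j1)) (j := (i2, j2)) hx hy
  -- choose N larger than all cohomological degrees of components of S
  set N : ℕ := 3 + hSfin.toFinset.sup
      (fun s => (DirectSum.decompose 𝒜 s).support.sup Prod.fst) with hN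
  have hN3 : 3 ≤ N := by omega
  -- every element of S lies in the subalgebra generated by degrees < N
  set U : Set EA := {x : EA | ∃ i j, i < N ∧ x ∈ extA i j} with hU
  set B : Subalgebra k EA := Algebra.adjoin k U with hB
  have hSB : S ⊆ B := by
    intro s hs
    have := DirectSum.sum_support_decompose 𝒜 s
    rw [← this]
    refine Subalgebra.sum_mem _ ?_
    intro p hp
    refine Algebra.subset_adjoin ⟨p.1, p.2, ?_, (DirectSum.decompose 𝒜 s p).2⟩
    have h1' : p.1 ≤ (DirectSum.decompose 𝒜 s).support.sup Prod.fst :=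
      Finset.le_sup (f := Prod.fst) hp
    have h2' : (DirectSum.decompose 𝒜 s).support.sup Prod.fst ≤
        hSfin.toFinset.sup (fun s => (DirectSum.decompose 𝒜 s).support.sup Prod.fst) :=
      Finset.le_sup (f := fun s => (DirectSum.decompose 𝒜 s).support.sup Prod.fst)
        (hSfin.mem_toFinset.mpr hs)
    omega
  have hBtop : B = ⊤ := top_le_iff.mp (hStop ▸ Algebra.adjoin_le hSB)
  -- every element of the monoid closure of U is homogeneous of degree < N
  have hcl : ∀ m ∈ Submonoid.closure U, ∃ i j, i < N ∧ m ∈ extA i j := by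
    intro m hm
    induction hm using Submonoid.closure_induction with
    | mem x hx => exact hx
    | one => exact ⟨0, 0, by omega, SetLike.one_mem_graded 𝒜⟩
    | mul x y hx hy ihx ihy =>
      obtain ⟨i1, j1, hi1, hx1⟩ := ihx
      obtain ⟨i2, j2, hi2, hx2⟩ := ihy
      by_cases hx0 : x = 0
      · exact ⟨0, 0, by omega, by rw [hx0, zero_mul]; exact Submodule.zero_mem _⟩
      by_cases hy0 : y = 0
      · exact ⟨0, 0, by omega, by rw [hy0, mul_zero]; exact Submodule.zero_mem _⟩
      by_cases hsum : i1 + i2 < N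
      · exact ⟨i1 + i2, j1 + j2, hsum, hmul _ _ _ _ _ _ hx1 hx2⟩
      · have c1 := hclass i1 j1 x hx1 hx0
        have c2 := hclass i2 j2 y hx2 hy0
        by_cases hJ : j1 + j2 = 2 * (i1 + i2) - 2
        · have hxy : x * y = 0 := by
            have e1 : (i1 + i2) - i1 = i2 := by omega
            have e2 : 2 * (i1 + i2) - j1 - 2 = j2 := by omega
            refine hzero (i1 + i2) (by omega) i1 j1 (by omega) (by omega) (by omega)
              (by omega) x hx1 y ?_
            rw [e1, e2]; exact hx2
          exact ⟨0, 0, by omega, by rw [hxy]; exact Submodule.zero_mem _⟩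
        · have hb : extA (i1 + i2) (j1 + j2) = ⊥ := h2 _ _ (by omega) hJ
          have : x * y ∈ (⊥ : Submodule k EA) := hb ▸ hmul _ _ _ _ _ _ hx1 hx2
          rw [Submodule.mem_bot] at this
          exact ⟨0, 0, by omega, by rw [this]; exact Submodule.zero_mem _⟩
  -- pick a nonzero element in degree (N, 2N-2) and derive a contradiction
  obtain ⟨v, hv, hv0⟩ := (Submodule.ne_bot_iff _).mp (hnb N (by omega))
  have hvB : v ∈ Submodule.span k (Submonoid.closure U : Set EA) := by
    rw [← Algebra.adjoin_eq_span, Subalgebra.mem_toSubmodule, ← hB, hBtop]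
    exact trivial
  have key : ∀ w ∈ Submodule.span k (Submonoid.closure U : Set EA),
      (DirectSum.decompose 𝒜 w (N, 2 * N - 2) : EA) = 0 := by
    intro w hw
    induction hw using Submodule.span_induction with
    | mem m hm =>
      obtain ⟨i, j, hiN, hmij⟩ := hcl m hm
      refine DirectSum.decompose_of_mem_ne 𝒜 (i := (i, j)) (show m ∈ 𝒜 (i, j) from hmij) ?_
      intro h
      have hiNe : i = N := congrArg Prod.fst h
      omega
    | zero => simp
    | add x y hx hy ihx ihy =>
      rw [DirectSum.decompose_add, DirectSum.add_apply, Submodule.coe_add, ihx, ihy, add_zero]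
    | smul a x hx ihx =>
      rw [DirectSum.decompose_smul, DFinsupp.smul_apply, Submodule.coe_smul, ihx, smul_zero]
  have hproj : (DirectSum.decompose 𝒜 v (N, 2 * N - 2) : EA) = 0 := key v hvB
  rw [DirectSum.decompose_of_mem_same 𝒜 hv] at hproj
  exact hv0 hproj

end CassidyPhanAlgebra
end
end

section
/- Suppose a bigraded algebra E = ⊕_{i,j≥0} E^{i,j} (connected, E^{0,0} = k) satisfies E^i = E^{i,i} for i ∈ {0,1} and E^i = E^{i,2i−2} for i ≥ 2, with E^{i,2i−2} ≠ 0 for all i ≥ 3. Then E is not generated as a k-algebra by any finite set of elements; indeed for each i ≥ 3 the product map ⊕_{0<j<i} E^j ⊗ E^{i−j} → E^i is zero. -/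
/-
Common framework: connected graded algebras are presented as quotients of the
free (tensor) algebra `FreeAlgebra k X` on a (finite) generating set `X` placed
in degree 1, by a set of homogeneous relations.  The (bigraded) Yoneda algebra
`E(R) = ⊕_{i,j} Ext_R^{i,j}(k,k)` of such an algebra is represented abstractly
by an ambient `k`-algebra `E` together with a bigraded family of subspaces
`ext : ℕ → ℕ → Submodule k E`, where `ext i j` stands for `Ext_R^{i,j}(k,k)`
(`i` = cohomological degree, `j` = internal degree).
-/

noncomputable section

/-- Suppose a connected bigraded `k`-algebra `E = ⊕_{i,j} E^{i,j}` (with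
`E^{0,0} = k·1`) satisfies `E^i = E^{i,i}` for `i ∈ {0,1}`, `E^i = E^{i,2i−2}`
for `i ≥ 2`, and `E^{i,2i−2} ≠ 0` for all `i ≥ 3`.  Then for each `i ≥ 3` the
product map `⊕_{0<j<i} E^j ⊗ E^{i−j} → E^i` is zero, and `E` is not generated
as a `k`-algebra by any finite set. -/
theorem bigraded_pattern_not_finitely_generated
    (k : Type) [Field k]
    (E : Type) [Ring E] [Algebra k E] (ext : ℕ → ℕ → Submodule k E)
    [GradedAlgebra (fun p : ℕ × ℕ => ext p.1 p.2)]
    -- connectedness: E^{0,0} = k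
    (hconn : ext 0 0 = Submodule.span k {(1 : E)})
    -- E^i = E^{i,i} for i ∈ {0, 1}
    (h0 : ∀ j, j ≠ 0 → ext 0 j = ⊥) (h1 : ∀ j, j ≠ 1 → ext 1 j = ⊥)
    -- E^i = E^{i,2i−2} for i ≥ 2
    (h2 : ∀ i j, 2 ≤ i → j ≠ 2 * i - 2 → ext i j = ⊥)
    -- E^{i,2i−2} ≠ 0 for i ≥ 3
    (hne : ∀ i, 3 ≤ i → ext i (2 * i - 2) ≠ ⊥) :
    (∀ i, 3 ≤ i → ∀ j, 0 < j → j < i →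
      ∀ x ∈ (⨆ l, ext j l : Submodule k E), ∀ y ∈ (⨆ l, ext (i - j) l : Submodule k E),
        x * y = 0) ∧
    ¬ ∃ S : Set E, S.Finite ∧ Algebra.adjoin k S = ⊤ := by
  classical
  have hsup : ∀ j, 0 < j →
      (⨆ l, ext j l : Submodule k E) ≤ ext j (if j = 1 then 1 else 2 * j - 2) := by
    intro j hj
    refine iSup_le fun l => ?_
    by_cases hl : l = if j = 1 then 1 else 2 * j - 2
    · exact hl ▸ le_rfl
    · have hb : ext j l = ⊥ := by
        rcases eq_or_ne j 1 with rfl | hj1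
        · exact h1 l (by simpa using hl)
        · exact h2 j l (by omega) (by simpa [if_neg hj1] using hl)
      exact hb ▸ bot_le
  have key : ∀ i, 3 ≤ i → ∀ j, 0 < j → j < i →
      ∀ x ∈ (⨆ l, ext j l : Submodule k E), ∀ y ∈ (⨆ l, ext (i - j) l : Submodule k E),
        x * y = 0 := by
    intro i hi j hj hji x hx y hy
    have hx' : x ∈ (fun p : ℕ × ℕ => ext p.1 p.2) (j, if j = 1 then 1 else 2 * j - 2) :=
      hsup j hj hx
    have hy' : y ∈ (fun p : ℕ × ℕ => ext p.1 p.2)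
        (i - j, if i - j = 1 then 1 else 2 * (i - j) - 2) :=
      hsup (i - j) (by omega) hy
    have hxy := SetLike.mul_mem_graded (A := fun p : ℕ × ℕ => ext p.1 p.2) hx' hy'
    have hideg : ((j, if j = 1 then 1 else 2 * j - 2) +
        (i - j, if i - j = 1 then 1 else 2 * (i - j) - 2) : ℕ × ℕ) =
        (i, (if j = 1 then 1 else 2 * j - 2) + (if i - j = 1 then 1 else 2 * (i - j) - 2)) := by
      rw [Prod.ext_iff]
      exact ⟨by simpa using (by omega : j + (i - j) = i), rfl⟩
    rw [hideg] at hxy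
    have hbot : ext i ((if j = 1 then 1 else 2 * j - 2) +
        (if i - j = 1 then 1 else 2 * (i - j) - 2)) = ⊥ := by
      refine h2 i _ (by omega) ?_
      split_ifs <;> omega
    simp only at hxy
    rw [hbot] at hxy
    simpa using hxy
  refine ⟨key, ?_⟩
  rintro ⟨S, hSfin, hadj⟩
  -- every element lies in the span of finitely many homogeneous components
  have hdec : ∀ s : E, ∃ F : Finset (ℕ × ℕ), s ∈ ⨆ p ∈ F, ext p.1 p.2 := by
    intro s
    have htop : (⨆ p : ℕ × ℕ, ext p.1 p.2) = ⊤ :=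
      (DirectSum.Decomposition.isInternal
        (fun p : ℕ × ℕ => ext p.1 p.2)).submodule_iSup_eq_top
    exact Submodule.mem_iSup_iff_exists_finset.mp (htop ▸ Submodule.mem_top)
  choose f hf using hdec
  set N : ℕ := max 2 (hSfin.toFinset.sup fun s => (f s).sup Prod.fst) with hN
  set B : Submodule k E := ⨆ (p : ℕ × ℕ) (_ : p.1 ≤ N), ext p.1 p.2 with hB
  have hpB : ∀ p : ℕ × ℕ, p.1 ≤ N → ext p.1 p.2 ≤ B := fun p hp =>
    le_iSup_of_le p (le_iSup_of_le hp le_rfl)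
  have hone : (1 : E) ∈ B := by
    refine hpB (0, 0) (by omega) ?_
    exact SetLike.one_mem_graded (fun p : ℕ × ℕ => ext p.1 p.2)
  have hmulB : ∀ x y : E, x ∈ B → y ∈ B → x * y ∈ B := by
    have hle : B * B ≤ B := by
      rw [hB, Submodule.iSup_mul]
      refine iSup_le fun p => ?_
      rw [Submodule.iSup_mul]
      refine iSup_le fun hp => ?_
      rw [Submodule.mul_iSup]
      refine iSup_le fun q => ?_
      rw [Submodule.mul_iSup]
      refine iSup_le fun hq => ?_
      refine Submodule.mul_le.mpr fun m hm n hn => ?_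
      by_cases hsum : p.1 + q.1 ≤ N
      · have := SetLike.mul_mem_graded (A := fun p : ℕ × ℕ => ext p.1 p.2) hm hn
        exact hpB (p + q) hsum this
      · -- then p.1 + q.1 ≥ 3 and both are positive
        have hp1 : 0 < p.1 := by omega
        have hq1 : 0 < q.1 := by omega
        have h3 : 3 ≤ p.1 + q.1 := by omega
        have hmn : m * n = 0 := by
          refine key (p.1 + q.1) h3 p.1 hp1 (by omega) m ?_ n ?_
          · exact le_iSup (fun l => ext p.1 l) p.2 hm
          · have he : p.1 + q.1 - p.1 = q.1 := by omega
            rw [he]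
            exact le_iSup (fun l => ext q.1 l) q.2 hn
        rw [hmn]
        exact B.zero_mem
    exact fun x y hx hy => Submodule.mul_le.mp hle x hx y hy
  have hSB : S ⊆ (B : Set E) := by
    intro s hs
    have hmem := hf s
    refine (iSup₂_le fun p hp => hpB p ?_) hmem
    have h1' : p.1 ≤ (f s).sup Prod.fst := Finset.le_sup hp
    have h2' : (f s).sup Prod.fst ≤ hSfin.toFinset.sup fun s => (f s).sup Prod.fst :=
      Finset.le_sup (f := fun s => (f s).sup Prod.fst) (hSfin.mem_toFinset.mpr hs)
    omega
  have hBtop : ∀ x : E, x ∈ B := by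
    intro x
    have hle : (⊤ : Subalgebra k E) ≤ B.toSubalgebra hone hmulB := by
      rw [← hadj]
      exact Algebra.adjoin_le fun s hs => Submodule.mem_toSubalgebra.mpr (hSB hs)
    exact Submodule.mem_toSubalgebra.mp (hle Algebra.mem_top)
  -- now derive the contradiction
  have hi3 : 3 ≤ N + 1 := by omega
  obtain ⟨x, hx, hx0⟩ := Submodule.exists_mem_ne_zero_of_ne_bot (hne (N + 1) hi3)
  have hxB : x ∈ B := hBtop x
  have hker : B ≤ LinearMap.ker (GradedAlgebra.proj (fun p : ℕ × ℕ => ext p.1 p.2)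
      (N + 1, 2 * (N + 1) - 2)) := by
    refine iSup₂_le fun q hq => fun m hm => ?_
    have hqne : q ≠ (N + 1, 2 * (N + 1) - 2) := by
      intro h
      rw [h] at hq
      simp only at hq
      omega
    simp only [LinearMap.mem_ker, GradedAlgebra.proj_apply]
    exact DirectSum.decompose_of_mem_ne (fun p : ℕ × ℕ => ext p.1 p.2) hm hqne
  have h1x : GradedAlgebra.proj (fun p : ℕ × ℕ => ext p.1 p.2) (N + 1, 2 * (N + 1) - 2) x = x := by
    rw [GradedAlgebra.proj_apply]
    exact DirectSum.decompose_of_mem_same _ hx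
  have hfin := hker hxB
  rw [LinearMap.mem_ker, h1x] at hfin
  exact hx0 hfin
end
end

section
/- In the free algebra k⟨a,x,y,z⟩ with degree-lexicographic order induced by z > y > x > a, the set g = {xa, az, ay} ∪ {y²z², x²y² + a⁴} is a Gröbner basis for the ideal it generates. -/
/-
Common framework: connected graded algebras are presented as quotients of the
free (tensor) algebra `FreeAlgebra k X` on a (finite) generating set `X` placed
in degree 1, by a set of homogeneous relations.  The (bigraded) Yoneda algebra
`E(R) = ⊕_{i,j} Ext_R^{i,j}(k,k)` of such an algebra is represented abstractly
by an ambient `k`-algebra `E` together with a bigraded family of subspaces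
`ext : ℕ → ℕ → Submodule k E`, where `ext i j` stands for `Ext_R^{i,j}(k,k)`
(`i` = cohomological degree, `j` = internal degree).
-/

noncomputable section

section Groebner

variable (k : Type) [Field k] {X : Type} [LinearOrder X]

/-- The coefficient of the word `w` in an element of the free algebra. -/
def coeffWord (f : FreeAlgebra k X) (w : List X) : k :=
  (FreeAlgebra.equivMonoidAlgebraFreeMonoid (R := k) (X := X) f).coeff (FreeMonoid.ofList w)

/-- Degree-lexicographic order on words over the ordered alphabet `X`. -/
def DegLexLT (u v : List X) : Prop :=
  u.length < v.length ∨ (u.length = v.length ∧ List.Lex (· < ·) u v)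

/-- `w` is the leading word (leading monomial) of `f` for the deg-lex order. -/
def IsLeadWord (f : FreeAlgebra k X) (w : List X) : Prop :=
  coeffWord k f w ≠ 0 ∧ ∀ u : List X, coeffWord k f u ≠ 0 → u = w ∨ DegLexLT u w

/-- The two-sided ideal of the free algebra generated by `S`, as a
`k`-submodule. -/
def twoSidedSpan (S : Set (FreeAlgebra k X)) : Submodule k (FreeAlgebra k X) :=
  Submodule.span k {x | ∃ a g b : FreeAlgebra k X, g ∈ S ∧ x = a * g * b}

/-- `G` is a (noncommutative) Gröbner basis for the two-sided ideal it
generates: the leading word of every nonzero element of the ideal contains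
the leading word of some element of `G` as a factor (connected subword). -/
def IsGroebnerBasis (G : Set (FreeAlgebra k X)) : Prop :=
  ∀ f ∈ twoSidedSpan k G, f ≠ 0 →
    ∃ g ∈ G, ∃ wf wg : List X,
      IsLeadWord k f wf ∧ IsLeadWord k g wg ∧ wg <:+: wf

end Groebner

namespace CGB
open Finsupp

abbrev W := List (Fin 4)

variable (k : Type) [Field k]

/-! ### The reduction operators on the free module with basis all words -/

def red0 (w : W) : W →₀ k :=
  if w.head? = some 2 ∨ w.head? = some 3 then 0 else single (0 :: w) 1

def red1 (w : W) : W →₀ k :=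
  if w.head? = some 0 then 0
  else if w.take 3 = [1, 2, 2] then
    (if (w.drop 3).head? = some 2 ∨ (w.drop 3).head? = some 3 then 0
     else - single (0 :: 0 :: 0 :: 0 :: w.drop 3) 1)
  else single (1 :: w) 1

def red2 (w : W) : W →₀ k :=
  if w.take 3 = [2, 3, 3] then 0 else single (2 :: w) 1

def red3 (w : W) : W →₀ k := single (3 :: w) 1

def red (c : Fin 4) : W → (W →₀ k) :=
  if c = 0 then red0 k else if c = 1 then red1 k else if c = 2 then red2 k else red3 k

@[simp] lemma red_zero : red k 0 = red0 k := rfl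
@[simp] lemma red_one : red k 1 = red1 k := rfl
@[simp] lemma red_two : red k 2 = red2 k := rfl
@[simp] lemma red_three : red k 3 = red3 k := rfl

def L (c : Fin 4) : (W →₀ k) →ₗ[k] (W →₀ k) := Finsupp.lift _ k W (red k c)

@[simp] lemma L_single (c : Fin 4) (w : W) : L k c (single w 1) = red k c w := by
  simp [L, Finsupp.lift_apply, Finsupp.sum_single_index]

lemma L_apply (c : Fin 4) (z : W →₀ k) : L k c z = z.sum fun w b => b • red k c w := by
  simp [L, Finsupp.lift_apply]

lemma lhom_ext1 {M : Type} [AddCommMonoid M] [Module k M] {φ ψ : (W →₀ k) →ₗ[k] M}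
    (h : ∀ w, φ (single w 1) = ψ (single w 1)) : φ = ψ :=
  Finsupp.lhom_ext fun a b => by
    rw [← smul_single_one, map_smul, map_smul, h]

/-! ### The five operator identities (overlap relations hold in the module) -/

lemma id_xa : (L k 1) ∘ₗ (L k 0) = 0 := by
  apply lhom_ext1
  intro w
  by_cases h : w.head? = some 2 ∨ w.head? = some 3 <;>
    simp [red0, red1, h]

lemma id_az : (L k 0) ∘ₗ (L k 3) = 0 := by
  apply lhom_ext1; intro w; simp [red0, red3]

lemma id_ay : (L k 0) ∘ₗ (L k 2) = 0 := by
  apply lhom_ext1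
  intro w
  by_cases h : w.take 3 = [2,3,3] <;> simp [red0, red2, h]

lemma id_yyzz : L k 2 ∘ₗ (L k 2 ∘ₗ (L k 3 ∘ₗ L k 3)) = 0 := by
  apply lhom_ext1; intro w; simp [red2, red3]

lemma id_main :
    L k 1 ∘ₗ (L k 1 ∘ₗ (L k 2 ∘ₗ L k 2)) + L k 0 ∘ₗ (L k 0 ∘ₗ (L k 0 ∘ₗ L k 0)) = 0 := by
  apply lhom_ext1
  intro w
  simp only [LinearMap.add_apply, LinearMap.comp_apply, LinearMap.zero_apply]
  rcases w with _ | ⟨c1, w⟩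
  · simp [red0, red1, red2]
  fin_cases c1
  · simp [red0, red1, red2]
  · simp [red0, red1, red2]
  · -- 2 :: w
    rcases w with _ | ⟨c2, w⟩
    · simp [red0, red1, red2]
    fin_cases c2
    · simp [red0, red1, red2]
    · simp [red0, red1, red2]
    · simp [red0, red1, red2]
    · -- 2 :: 3 :: w
      rcases w with _ | ⟨c3, w⟩
      · simp [red0, red1, red2]
      fin_cases c3 <;> simp [red0, red1, red2]
  · -- 3 :: w
    rcases w with _ | ⟨c2, w⟩
    · simp [red0, red1, red2]
    fin_cases c2 <;> simp [red0, red1, red2]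

/-! ### The representation of the free algebra -/

def Phi : FreeAlgebra k (Fin 4) →ₐ[k] Module.End k (W →₀ k) :=
  FreeAlgebra.lift k (fun c => L k c)

@[simp] lemma Phi_iota (c : Fin 4) : Phi k (FreeAlgebra.ι k c) = L k c :=
  FreeAlgebra.lift_ι_apply _ _

def Psi : FreeAlgebra k (Fin 4) →ₗ[k] (W →₀ k) where
  toFun f := Phi k f (single [] 1)
  map_add' f g := by simp
  map_smul' c f := by simp

@[simp] lemma Psi_apply (f : FreeAlgebra k (Fin 4)) : Psi k f = Phi k f (single [] 1) := rfl

lemma mono_nil : FreeMonomial k ([] : W) = 1 := rfl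

lemma mono_cons (c : Fin 4) (w : W) :
    FreeMonomial k (c :: w) = FreeAlgebra.ι k c * FreeMonomial k w := by
  simp [FreeMonomial]

lemma Psi_mono_nil : Psi k (FreeMonomial k ([] : W)) = single [] 1 := by
  simp [mono_nil]

lemma Psi_mono_cons (c : Fin 4) (w : W) :
    Psi k (FreeMonomial k (c :: w)) = L k c (Psi k (FreeMonomial k w)) := by
  simp [mono_cons, map_mul, Module.End.mul_apply]

/-! ### Normal words -/

def Norm (w : W) : Prop :=
  ¬([1,0] <:+: w) ∧ ¬([0,3] <:+: w) ∧ ¬([0,2] <:+: w) ∧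
    ¬([2,2,3,3] <:+: w) ∧ ¬([1,1,2,2] <:+: w)

lemma Norm.tail {c : Fin 4} {w : W} (h : Norm (c :: w)) : Norm w := by
  obtain ⟨h1, h2, h3, h4, h5⟩ := h
  exact ⟨fun h => h1 (h.trans (List.suffix_cons c w).isInfix),
    fun h => h2 (h.trans (List.suffix_cons c w).isInfix),
    fun h => h3 (h.trans (List.suffix_cons c w).isInfix),
    fun h => h4 (h.trans (List.suffix_cons c w).isInfix),
    fun h => h5 (h.trans (List.suffix_cons c w).isInfix)⟩

lemma eq_take_drop (w : W) {p : W} (h : w.take 3 = p) : w = p ++ w.drop 3 := by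
  conv_lhs => rw [← List.take_append_drop 3 w, h]

lemma head?_cases (w : W) (c : Fin 4) (h : w.head? = some c) : w = c :: w.tail := by
  cases w with
  | nil => simp at h
  | cons a t => simp_all

lemma red_eq {c : Fin 4} {w : W} (h : Norm (c :: w)) : red k c w = single (c :: w) 1 := by
  fin_cases c
  · -- c = 0
    show red k 0 w = single (0 :: w) 1
    rw [red_zero, red0, if_neg]
    rintro (h2 | h3)
    · exact h.2.2.1 ⟨[], w.tail, by rw [head?_cases w 2 h2]; rfl⟩
    · exact h.2.1 ⟨[], w.tail, by rw [head?_cases w 3 h3]; rfl⟩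
  · -- c = 1
    show red k 1 w = single (1 :: w) 1
    rw [red_one, red1, if_neg, if_neg]
    · intro ht
      exact h.2.2.2.2 ⟨[], w.drop 3, by rw [eq_take_drop w ht]; rfl⟩
    · intro h0
      exact h.1 ⟨[], w.tail, by rw [head?_cases w 0 h0]; rfl⟩
  · -- c = 2
    show red k 2 w = single (2 :: w) 1
    rw [red_two, red2, if_neg]
    intro ht
    exact h.2.2.2.1 ⟨[], w.drop 3, by rw [eq_take_drop w ht]; rfl⟩
  · show red k 3 w = single (3 :: w) 1
    rfl

lemma Psi_norm {w : W} (h : Norm w) : Psi k (FreeMonomial k w) = single w 1 := by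
  induction w with
  | nil => exact Psi_mono_nil k
  | cons c t ih =>
      rw [Psi_mono_cons, ih h.tail, L_single, red_eq k h]

/-! ### Deg-lex order lemmas -/

lemma dlt_trans {u v w : W} (h : DegLexLT u v) (h' : DegLexLT v w) : DegLexLT u w := by
  rcases h with h | ⟨e, h⟩ <;> rcases h' with h' | ⟨e', h'⟩
  · exact Or.inl (h.trans h')
  · exact Or.inl (e' ▸ h)
  · exact Or.inl (e ▸ h')
  · exact Or.inr ⟨e.trans e', List.lex_trans lt_trans h h'⟩

lemma dlt_irrefl (u : W) : ¬ DegLexLT u u := by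
  rintro (h | ⟨_, h⟩)
  · exact lt_irrefl _ h
  · exact asymm h h

lemma dlt_total (u v : W) : u = v ∨ DegLexLT u v ∨ DegLexLT v u := by
  rcases Nat.lt_trichotomy u.length v.length with h | h | h
  · exact Or.inr (Or.inl (Or.inl h))
  · rcases (trichotomous u v : List.Lex (· < ·) u v ∨ u = v ∨ List.Lex (· < ·) v u) with
      h' | h' | h'
    · exact Or.inr (Or.inl (Or.inr ⟨h, h'⟩))
    · exact Or.inl h'
    · exact Or.inr (Or.inr (Or.inr ⟨h.symm, h'⟩))
  · exact Or.inr (Or.inr (Or.inl h))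

def DLE (u v : W) : Prop := u = v ∨ DegLexLT u v

lemma dle_refl (u : W) : DLE u u := Or.inl rfl

lemma dle_trans {u v w : W} (h : DLE u v) (h' : DLE v w) : DLE u w := by
  rcases h with rfl | h
  · exact h'
  rcases h' with rfl | h'
  · exact Or.inr h
  · exact Or.inr (dlt_trans h h')

lemma dlt_cons {u v : W} (c : Fin 4) (h : DegLexLT u v) : DegLexLT (c :: u) (c :: v) := by
  rcases h with h | ⟨e, h⟩
  · exact Or.inl (Nat.succ_lt_succ h)
  · exact Or.inr ⟨by simp [e], List.Lex.cons h⟩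

lemma dle_cons {u v : W} (c : Fin 4) (h : DLE u v) : DLE (c :: u) (c :: v) := by
  rcases h with rfl | h
  · exact dle_refl _
  · exact Or.inr (dlt_cons c h)

lemma exists_max (s : Finset W) : s.Nonempty → ∃ m ∈ s, ∀ b ∈ s, b = m ∨ DegLexLT b m := by
  classical
  induction s using Finset.induction_on with
  | empty => rintro ⟨x, hx⟩; simp at hx
  | @insert a t ha ih =>
    intro _
    rcases t.eq_empty_or_nonempty with rfl | ht
    · exact ⟨a, by simp, by simp⟩
    obtain ⟨m, hm, hmax⟩ := ih ht
    have htot := dlt_total a m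
    rcases htot with rfl | hlt | hlt
    · exact ⟨a, Finset.mem_insert_of_mem hm, by
        intro b hb
        rcases Finset.mem_insert.1 hb with rfl | hb
        · exact Or.inl rfl
        · exact hmax b hb⟩
    · exact ⟨m, Finset.mem_insert_of_mem hm, by
        intro b hb
        rcases Finset.mem_insert.1 hb with rfl | hb
        · exact Or.inr hlt
        · exact hmax b hb⟩
    · refine ⟨a, Finset.mem_insert_self a t, ?_⟩
      intro b hb
      rcases Finset.mem_insert.1 hb with rfl | hb
      · exact Or.inl rfl
      rcases hmax b hb with rfl | h
      · exact Or.inr hlt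
      · exact Or.inr (dlt_trans h hlt)

/-! ### Support estimates: reduction does not increase the deg-lex order -/

lemma red0_support (w : W) {v : W} (hv : v ∈ (red0 k w).support) : DLE v (0 :: w) := by
  rw [red0] at hv
  split_ifs at hv with h
  · simp at hv
  · exact Or.inl (Finset.mem_singleton.1 (support_single_subset hv))

lemma red1_support (w : W) {v : W} (hv : v ∈ (red1 k w).support) : DLE v (1 :: w) := by
  rw [red1] at hv
  split_ifs at hv with h0 h3 hh
  · simp at hv
  · simp at hv
  · rw [support_neg] at hv
    have hv' := Finset.mem_singleton.1 (support_single_subset hv)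
    subst hv'
    have hw : w = [1, 2, 2] ++ w.drop 3 := eq_take_drop w h3
    refine Or.inr (Or.inr ⟨?_, ?_⟩)
    · conv_rhs => rw [hw]
      simp
    · conv_rhs => rw [hw]
      exact List.Lex.rel (by decide)
  · exact Or.inl (Finset.mem_singleton.1 (support_single_subset hv))

lemma red2_support (w : W) {v : W} (hv : v ∈ (red2 k w).support) : DLE v (2 :: w) := by
  rw [red2] at hv
  split_ifs at hv with h
  · simp at hv
  · exact Or.inl (Finset.mem_singleton.1 (support_single_subset hv))

lemma red3_support (w : W) {v : W} (hv : v ∈ (red3 k w).support) : DLE v (3 :: w) := by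
  rw [red3] at hv
  exact Or.inl (Finset.mem_singleton.1 (support_single_subset hv))

lemma red_support (c : Fin 4) (w : W) {v : W} (hv : v ∈ (red k c w).support) :
    DLE v (c :: w) := by
  fin_cases c
  · exact red0_support k w hv
  · exact red1_support k w hv
  · exact red2_support k w hv
  · exact red3_support k w hv

lemma Psi_mono_support (u : W) : ∀ v ∈ (Psi k (FreeMonomial k u)).support, DLE v u := by
  classical
  induction u with
  | nil =>
      intro v hv
      rw [Psi_mono_nil] at hv
      exact Or.inl (Finset.mem_singleton.1 (support_single_subset hv))
  | cons c t ih =>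
      intro v hv
      rw [Psi_mono_cons, L_apply] at hv
      obtain ⟨w, hw, hvw⟩ := Finset.mem_biUnion.1 (Finsupp.support_sum hv)
      have hvw' : v ∈ (red k c w).support := Finsupp.support_smul hvw
      exact dle_trans (red_support k c w hvw') (dle_cons c (ih w hw))

/-! ### Vanishing on the ideal -/

lemma Phi_mono₂ (c d : Fin 4) : Phi k (FreeMonomial k [c, d]) = (L k c) ∘ₗ (L k d) := by
  simp [FreeMonomial, Module.End.mul_eq_comp]

lemma Phi_mono₄ (c d e f : Fin 4) :
    Phi k (FreeMonomial k [c, d, e, f]) = L k c ∘ₗ (L k d ∘ₗ (L k e ∘ₗ L k f)) := by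
  simp [FreeMonomial, Module.End.mul_eq_comp]

lemma Psi_span {G : Set (FreeAlgebra k (Fin 4))} (hG : ∀ g ∈ G, Phi k g = 0)
    {f : FreeAlgebra k (Fin 4)} (hf : f ∈ twoSidedSpan k G) : Psi k f = 0 := by
  refine Submodule.span_induction ?_ ?_ ?_ ?_ hf
  · rintro x ⟨a, g, b, hg, rfl⟩
    simp [map_mul, Module.End.mul_apply, hG g hg]
  · simp
  · intro x y _ _ hx hy
    rw [map_add, hx, hy, add_zero]
  · intro c x _ hx
    rw [map_smul, hx, smul_zero]

/-! ### Coefficients of monomials -/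

lemma equiv_iota (c : Fin 4) :
    FreeAlgebra.equivMonoidAlgebraFreeMonoid (R := k) (FreeAlgebra.ι k c)
      = MonoidAlgebra.single (FreeMonoid.of c) 1 := by
  simp [FreeAlgebra.equivMonoidAlgebraFreeMonoid, MonoidAlgebra.of_apply]

lemma equiv_mono (w : W) :
    FreeAlgebra.equivMonoidAlgebraFreeMonoid (R := k) (FreeMonomial k w)
      = MonoidAlgebra.single (FreeMonoid.ofList w) 1 := by
  induction w with
  | nil =>
      rw [mono_nil, map_one, FreeMonoid.ofList_nil]
      rfl
  | cons c t ih =>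
      rw [mono_cons, map_mul, ih, equiv_iota, MonoidAlgebra.single_mul_single, one_mul,
        FreeMonoid.ofList_cons]

lemma coeff_mono (w u : W) : coeffWord k (FreeMonomial k w) u = if u = w then 1 else 0 := by
  classical
  rw [coeffWord, equiv_mono, MonoidAlgebra.coeff_single, Finsupp.single_apply]
  simp [FreeMonoid.ofList.injective.eq_iff, eq_comm]

lemma lead_mono (w : W) : IsLeadWord k (FreeMonomial k w) w := by
  constructor
  · simp [coeff_mono]
  · intro u hu
    rw [coeff_mono] at hu
    split_ifs at hu with h
    · exact Or.inl h
    · exact absurd rfl hu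

lemma coeff_add (f g : FreeAlgebra k (Fin 4)) (u : W) :
    coeffWord k (f + g) u = coeffWord k f u + coeffWord k g u := by
  rw [coeffWord, coeffWord, coeffWord, map_add]
  exact Finsupp.add_apply _ _ _

lemma lead_g5 :
    IsLeadWord k (FreeMonomial k ([1,1,2,2] : W) + FreeMonomial k ([0,0,0,0] : W)) ([1,1,2,2] : W) := by
  constructor
  · rw [coeff_add, coeff_mono, coeff_mono]
    norm_num
  · intro u hu
    rw [coeff_add, coeff_mono, coeff_mono] at hu
    by_cases h1 : u = [1,1,2,2]
    · exact Or.inl h1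
    by_cases h2 : u = [0,0,0,0]
    · subst h2
      exact Or.inr (Or.inr ⟨rfl, List.Lex.rel (by decide)⟩)
    · rw [if_neg h1, if_neg h2] at hu
      exact (hu (by norm_num)).elim

/-! ### The leading coefficient is detected by `Psi` when the lead word is normal -/

lemma Psi_eq_coeff {f : FreeAlgebra k (Fin 4)} {wf : W}
    (hl : IsLeadWord k f wf) (hN : Norm wf) : Psi k f wf = coeffWord k f wf := by
  classical
  set F := FreeAlgebra.equivMonoidAlgebraFreeMonoid (R := k) f with hF
  have hf : f = F.coeff.sum fun m c => c • FreeMonomial k (FreeMonoid.toList m) := by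
    apply (FreeAlgebra.equivMonoidAlgebraFreeMonoid (R := k)).injective
    rw [map_finsuppSum]
    simp_rw [map_smul, equiv_mono, FreeMonoid.ofList_toList, MonoidAlgebra.smul_single', mul_one]
    rw [MonoidAlgebra.sum_coeff_single]
  have h3 : Psi k f wf = F.coeff.sum fun m c => c • (Psi k (FreeMonomial k m.toList) wf) := by
    conv_lhs => rw [hf]
    rw [map_finsuppSum]
    rw [Finsupp.sum_apply]
    simp_rw [map_smul, Finsupp.smul_apply]
  rw [h3, Finsupp.sum_eq_single (FreeMonoid.ofList wf)]
  · rw [FreeMonoid.toList_ofList, Psi_norm k hN, Finsupp.single_eq_same, smul_eq_mul, mul_one]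
    rfl
  · intro m hm hne
    have hcoeff : coeffWord k f m.toList ≠ 0 := by
      rw [coeffWord, FreeMonoid.ofList_toList]
      exact hm
    rcases hl.2 _ hcoeff with he | hlt
    · exact absurd (by rw [← he, FreeMonoid.ofList_toList]) hne
    · have hns : wf ∉ (Psi k (FreeMonomial k m.toList)).support := by
        intro hw
        rcases Psi_mono_support k _ _ hw with he | hlt2
        · exact dlt_irrefl _ (he ▸ hlt)
        · exact dlt_irrefl _ (dlt_trans hlt2 hlt)
      rw [Finsupp.notMem_support_iff] at hns
      rw [hns, smul_zero]
  · intro _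
    rw [zero_smul]

/-! ### Existence of lead words -/

lemma exists_lead {f : FreeAlgebra k (Fin 4)} (hf : f ≠ 0) : ∃ wf, IsLeadWord k f wf := by
  classical
  set F := FreeAlgebra.equivMonoidAlgebraFreeMonoid (R := k) f with hF
  have hFne : F ≠ 0 := by
    intro h
    apply hf
    apply (FreeAlgebra.equivMonoidAlgebraFreeMonoid (R := k)).injective
    rw [← hF, h, map_zero]
  have hs : (F.coeff.support.image FreeMonoid.toList).Nonempty :=
    (Finsupp.support_nonempty_iff.2 (by simpa using hFne)).image _
  obtain ⟨m, hm, hmax⟩ := exists_max _ hs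
  obtain ⟨m', hm', rfl⟩ := Finset.mem_image.1 hm
  refine ⟨m'.toList, ?_, ?_⟩
  · rw [coeffWord, FreeMonoid.ofList_toList]
    exact Finsupp.mem_support_iff.1 hm'
  · intro u hu
    refine hmax u (Finset.mem_image.2 ⟨FreeMonoid.ofList u, ?_, FreeMonoid.toList_ofList u⟩)
    exact Finsupp.mem_support_iff.2 hu

end CGB

/-- Example `counter`, Gröbner basis claim.
In the free algebra `k⟨a,x,y,z⟩` (generators encoded as `a = 0, x = 1, y = 2,
z = 3 : Fin 4`, so the deg-lex order satisfies `z > y > x > a`), the set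
`g = {xa, az, ay} ∪ {y²z², x²y² + a⁴}` is a Gröbner basis for the two-sided
ideal it generates. -/
theorem counterexample_groebner_basis (k : Type) [Field k] :
    IsGroebnerBasis k
      ({ FreeMonomial k [1, 0],                          -- xa
         FreeMonomial k [0, 3],                          -- az
         FreeMonomial k [0, 2],                          -- ay
         FreeMonomial k [2, 2, 3, 3],                    -- y²z²
         FreeMonomial k [1, 1, 2, 2] + FreeMonomial k [0, 0, 0, 0]  -- x²y² + a⁴
       } : Set (FreeAlgebra k (Fin 4))) := by
  classical
  intro f hf hf0
  obtain ⟨wf, hlead⟩ := CGB.exists_lead k hf0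
  have hPhiG : ∀ g ∈ ({ FreeMonomial k [1, 0], FreeMonomial k [0, 3], FreeMonomial k [0, 2],
      FreeMonomial k [2, 2, 3, 3],
      FreeMonomial k [1, 1, 2, 2] + FreeMonomial k [0, 0, 0, 0] } :
      Set (FreeAlgebra k (Fin 4))), CGB.Phi k g = 0 := by
    intro g hg
    simp only [Set.mem_insert_iff, Set.mem_singleton_iff] at hg
    rcases hg with rfl | rfl | rfl | rfl | rfl
    · rw [CGB.Phi_mono₂]; exact CGB.id_xa k
    · rw [CGB.Phi_mono₂]; exact CGB.id_az k
    · rw [CGB.Phi_mono₂]; exact CGB.id_ay k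
    · rw [CGB.Phi_mono₄]; exact CGB.id_yyzz k
    · rw [map_add, CGB.Phi_mono₄, CGB.Phi_mono₄]; exact CGB.id_main k
  have hnn : ¬ CGB.Norm wf := by
    intro hN
    have h1 := CGB.Psi_span k hPhiG hf
    have h2 := CGB.Psi_eq_coeff k hlead hN
    rw [h1] at h2
    exact hlead.1 (by rw [← h2]; simp)
  by_cases h1 : [1, 0] <:+: wf
  · exact ⟨FreeMonomial k [1, 0], by simp, wf, [1, 0], hlead, CGB.lead_mono k _, h1⟩
  by_cases h2 : [0, 3] <:+: wf
  · exact ⟨FreeMonomial k [0, 3], by simp, wf, [0, 3], hlead, CGB.lead_mono k _, h2⟩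
  by_cases h3 : [0, 2] <:+: wf
  · exact ⟨FreeMonomial k [0, 2], by simp, wf, [0, 2], hlead, CGB.lead_mono k _, h3⟩
  by_cases h4 : [2, 2, 3, 3] <:+: wf
  · exact ⟨FreeMonomial k [2, 2, 3, 3], by simp, wf, [2, 2, 3, 3], hlead,
      CGB.lead_mono k _, h4⟩
  by_cases h5 : [1, 1, 2, 2] <:+: wf
  · exact ⟨FreeMonomial k [1, 1, 2, 2] + FreeMonomial k [0, 0, 0, 0], by simp, wf,
      [1, 1, 2, 2], hlead, CGB.lead_g5 k, h5⟩
  · exact absurd ⟨h1, h2, h3, h4, h5⟩ hnn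
end
end

section
/- Let A = k⟨a,b,c,d,e,f,l,m⟩/⟨bc−ef, ae, da−lm, cl⟩ with generators ordered a < b < ⋯ < m and the degree-lexicographic order on monomials. Then the associated graded algebra of A under the induced filtration is the monomial algebra gr A ≅ k⟨a,b,c,d,e,f,l,m⟩/⟨ef, ae, lm, cl, abc, cda⟩. -/
/-
Common framework: connected graded algebras are presented as quotients of the
free (tensor) algebra `FreeAlgebra k X` on a (finite) generating set `X` placed
in degree 1, by a set of homogeneous relations.  The (bigraded) Yoneda algebra
`E(R) = ⊕_{i,j} Ext_R^{i,j}(k,k)` of such an algebra is represented abstractly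
by an ambient `k`-algebra `E` together with a bigraded family of subspaces
`ext : ℕ → ℕ → Submodule k E`, where `ext i j` stands for `Ext_R^{i,j}(k,k)`
(`i` = cohomological degree, `j` = internal degree).
-/

noncomputable section

/-! ### Auxiliary material for Statement 15 -/

namespace Assoc15

section OrderLemmas

lemma lex_append_right {α : Type*} [LinearOrder α] (q : List α) :
    ∀ u w : List α, u.length = w.length → List.Lex (· < ·) u w →
      List.Lex (· < ·) (u ++ q) (w ++ q)
  | [], [], _, hl => by cases hl
  | [], _ :: _, h, _ => by simp at h
  | _ :: _, [], h, _ => by simp at h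
  | a :: u, b :: w, h, hl => by
      cases hl with
      | rel hr => exact List.Lex.rel hr
      | cons hl' => exact List.Lex.cons (lex_append_right q u w (by simpa using h) hl')

lemma lex_append_left {α : Type*} [LinearOrder α] (p : List α) {u w : List α}
    (h : List.Lex (· < ·) u w) : List.Lex (· < ·) (p ++ u) (p ++ w) := by
  induction p with
  | nil => exact h
  | cons a p ih => exact List.Lex.cons ih

lemma deglex_irrefl {X : Type} [LinearOrder X] (u : List X) : ¬ DegLexLT u u := by
  rintro (h | ⟨-, h⟩)
  · exact lt_irrefl _ h
  · exact irrefl_of (List.Lex (· < ·)) u h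

lemma deglex_trans {X : Type} [LinearOrder X] {u v w : List X}
    (h1 : DegLexLT u v) (h2 : DegLexLT v w) : DegLexLT u w := by
  rcases h1 with h1 | ⟨e1, l1⟩ <;> rcases h2 with h2 | ⟨e2, l2⟩
  · exact Or.inl (h1.trans h2)
  · exact Or.inl (e2 ▸ h1)
  · exact Or.inl (e1 ▸ h2)
  · exact Or.inr ⟨e1.trans e2, List.lex_trans lt_trans l1 l2⟩

lemma deglex_cons {X : Type} [LinearOrder X] (i : X) {u v : List X}
    (h : DegLexLT u v) : DegLexLT (i :: u) (i :: v) := by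
  rcases h with h | ⟨e, l⟩
  · exact Or.inl (by simpa using h)
  · exact Or.inr ⟨by simpa using e, List.Lex.cons l⟩

lemma deglex_append {X : Type} [LinearOrder X] (p q : List X) {u v : List X}
    (h : DegLexLT u v) : DegLexLT (p ++ u ++ q) (p ++ v ++ q) := by
  rcases h with h | ⟨e, l⟩
  · exact Or.inl (by simp only [List.length_append]; omega)
  · exact Or.inr ⟨by simp only [List.length_append, e],
      lex_append_right q (p ++ u) (p ++ v) (by simp only [List.length_append, e])
        (lex_append_left p l)⟩

end OrderLemmas

variable (k : Type) [Field k]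

abbrev B := List (Fin 8) →₀ k

def step (i : Fin 8) (v : List (Fin 8)) : B k :=
  match i, v with
  | 0, 4 :: _ => 0
  | 0, 1 :: 2 :: _ => 0
  | 2, 6 :: _ => 0
  | 2, 3 :: 0 :: _ => 0
  | 4, 5 :: 6 :: _ => 0
  | 4, 5 :: 3 :: 0 :: _ => 0
  | 4, 5 :: t => Finsupp.single (1 :: 2 :: t) 1
  | 6, 7 :: 4 :: _ => 0
  | 6, 7 :: 1 :: 2 :: _ => 0
  | 6, 7 :: t => Finsupp.single (3 :: 0 :: t) 1
  | i, v => Finsupp.single (i :: v) 1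

def T (i : Fin 8) : B k →ₗ[k] B k := Finsupp.linearCombination k (step k i)

lemma T_single (i : Fin 8) (w : List (Fin 8)) (c : k) :
    T k i (Finsupp.single w c) = c • step k i w := Finsupp.linearCombination_single ..

lemma TS1 (i : Fin 8) (w : List (Fin 8)) :
    T k i (Finsupp.single w 1) = step k i w := by rw [T_single, one_smul]

lemma relBC_pt (v : List (Fin 8)) : T k 1 (step k 2 v) = T k 4 (step k 5 v) := by
  match v with
  | [] => rw [show step k 2 [] = Finsupp.single [2] (1:k) from rfl, TS1 k 1]; rw [show step k 5 [] = Finsupp.single [5] (1:k) from rfl, TS1 k 4]; rfl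
  | 0 :: t => rw [show step k 2 (0 :: t) = Finsupp.single (2 :: 0 :: t) (1:k) from rfl, TS1 k 1]; rw [show step k 5 (0 :: t) = Finsupp.single (5 :: 0 :: t) (1:k) from rfl, TS1 k 4]; rfl
  | 1 :: t => rw [show step k 2 (1 :: t) = Finsupp.single (2 :: 1 :: t) (1:k) from rfl, TS1 k 1]; rw [show step k 5 (1 :: t) = Finsupp.single (5 :: 1 :: t) (1:k) from rfl, TS1 k 4]; rfl
  | 2 :: t => rw [show step k 2 (2 :: t) = Finsupp.single (2 :: 2 :: t) (1:k) from rfl, TS1 k 1]; rw [show step k 5 (2 :: t) = Finsupp.single (5 :: 2 :: t) (1:k) from rfl, TS1 k 4]; rfl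
  | [3] => rw [show step k 2 [3] = Finsupp.single [2, 3] (1:k) from rfl, TS1 k 1]; rw [show step k 5 [3] = Finsupp.single [5, 3] (1:k) from rfl, TS1 k 4]; rfl
  | 3 :: 0 :: t => rw [show step k 2 (3 :: 0 :: t) = (0 : B k) from rfl, map_zero (T k 1)]; rw [show step k 5 (3 :: 0 :: t) = Finsupp.single (5 :: 3 :: 0 :: t) (1:k) from rfl, TS1 k 4]; rfl
  | 3 :: 1 :: t => rw [show step k 2 (3 :: 1 :: t) = Finsupp.single (2 :: 3 :: 1 :: t) (1:k) from rfl, TS1 k 1]; rw [show step k 5 (3 :: 1 :: t) = Finsupp.single (5 :: 3 :: 1 :: t) (1:k) from rfl, TS1 k 4]; rfl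
  | 3 :: 2 :: t => rw [show step k 2 (3 :: 2 :: t) = Finsupp.single (2 :: 3 :: 2 :: t) (1:k) from rfl, TS1 k 1]; rw [show step k 5 (3 :: 2 :: t) = Finsupp.single (5 :: 3 :: 2 :: t) (1:k) from rfl, TS1 k 4]; rfl
  | 3 :: 3 :: t => rw [show step k 2 (3 :: 3 :: t) = Finsupp.single (2 :: 3 :: 3 :: t) (1:k) from rfl, TS1 k 1]; rw [show step k 5 (3 :: 3 :: t) = Finsupp.single (5 :: 3 :: 3 :: t) (1:k) from rfl, TS1 k 4]; rfl
  | 3 :: 4 :: t => rw [show step k 2 (3 :: 4 :: t) = Finsupp.single (2 :: 3 :: 4 :: t) (1:k) from rfl, TS1 k 1]; rw [show step k 5 (3 :: 4 :: t) = Finsupp.single (5 :: 3 :: 4 :: t) (1:k) from rfl, TS1 k 4]; rfl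
  | 3 :: 5 :: t => rw [show step k 2 (3 :: 5 :: t) = Finsupp.single (2 :: 3 :: 5 :: t) (1:k) from rfl, TS1 k 1]; rw [show step k 5 (3 :: 5 :: t) = Finsupp.single (5 :: 3 :: 5 :: t) (1:k) from rfl, TS1 k 4]; rfl
  | 3 :: 6 :: t => rw [show step k 2 (3 :: 6 :: t) = Finsupp.single (2 :: 3 :: 6 :: t) (1:k) from rfl, TS1 k 1]; rw [show step k 5 (3 :: 6 :: t) = Finsupp.single (5 :: 3 :: 6 :: t) (1:k) from rfl, TS1 k 4]; rfl
  | 3 :: 7 :: t => rw [show step k 2 (3 :: 7 :: t) = Finsupp.single (2 :: 3 :: 7 :: t) (1:k) from rfl, TS1 k 1]; rw [show step k 5 (3 :: 7 :: t) = Finsupp.single (5 :: 3 :: 7 :: t) (1:k) from rfl, TS1 k 4]; rfl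
  | 4 :: t => rw [show step k 2 (4 :: t) = Finsupp.single (2 :: 4 :: t) (1:k) from rfl, TS1 k 1]; rw [show step k 5 (4 :: t) = Finsupp.single (5 :: 4 :: t) (1:k) from rfl, TS1 k 4]; rfl
  | 5 :: t => rw [show step k 2 (5 :: t) = Finsupp.single (2 :: 5 :: t) (1:k) from rfl, TS1 k 1]; rw [show step k 5 (5 :: t) = Finsupp.single (5 :: 5 :: t) (1:k) from rfl, TS1 k 4]; rfl
  | 6 :: t => rw [show step k 2 (6 :: t) = (0 : B k) from rfl, map_zero (T k 1)]; rw [show step k 5 (6 :: t) = Finsupp.single (5 :: 6 :: t) (1:k) from rfl, TS1 k 4]; rfl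
  | 7 :: t => rw [show step k 2 (7 :: t) = Finsupp.single (2 :: 7 :: t) (1:k) from rfl, TS1 k 1]; rw [show step k 5 (7 :: t) = Finsupp.single (5 :: 7 :: t) (1:k) from rfl, TS1 k 4]; rfl

lemma relDA_pt (v : List (Fin 8)) : T k 3 (step k 0 v) = T k 6 (step k 7 v) := by
  match v with
  | [] => rw [show step k 0 [] = Finsupp.single [0] (1:k) from rfl, TS1 k 3]; rw [show step k 7 [] = Finsupp.single [7] (1:k) from rfl, TS1 k 6]; rfl
  | 0 :: t => rw [show step k 0 (0 :: t) = Finsupp.single (0 :: 0 :: t) (1:k) from rfl, TS1 k 3]; rw [show step k 7 (0 :: t) = Finsupp.single (7 :: 0 :: t) (1:k) from rfl, TS1 k 6]; rfl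
  | [1] => rw [show step k 0 [1] = Finsupp.single [0, 1] (1:k) from rfl, TS1 k 3]; rw [show step k 7 [1] = Finsupp.single [7, 1] (1:k) from rfl, TS1 k 6]; rfl
  | 1 :: 0 :: t => rw [show step k 0 (1 :: 0 :: t) = Finsupp.single (0 :: 1 :: 0 :: t) (1:k) from rfl, TS1 k 3]; rw [show step k 7 (1 :: 0 :: t) = Finsupp.single (7 :: 1 :: 0 :: t) (1:k) from rfl, TS1 k 6]; rfl
  | 1 :: 1 :: t => rw [show step k 0 (1 :: 1 :: t) = Finsupp.single (0 :: 1 :: 1 :: t) (1:k) from rfl, TS1 k 3]; rw [show step k 7 (1 :: 1 :: t) = Finsupp.single (7 :: 1 :: 1 :: t) (1:k) from rfl, TS1 k 6]; rfl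
  | 1 :: 2 :: t => rw [show step k 0 (1 :: 2 :: t) = (0 : B k) from rfl, map_zero (T k 3)]; rw [show step k 7 (1 :: 2 :: t) = Finsupp.single (7 :: 1 :: 2 :: t) (1:k) from rfl, TS1 k 6]; rfl
  | 1 :: 3 :: t => rw [show step k 0 (1 :: 3 :: t) = Finsupp.single (0 :: 1 :: 3 :: t) (1:k) from rfl, TS1 k 3]; rw [show step k 7 (1 :: 3 :: t) = Finsupp.single (7 :: 1 :: 3 :: t) (1:k) from rfl, TS1 k 6]; rfl
  | 1 :: 4 :: t => rw [show step k 0 (1 :: 4 :: t) = Finsupp.single (0 :: 1 :: 4 :: t) (1:k) from rfl, TS1 k 3]; rw [show step k 7 (1 :: 4 :: t) = Finsupp.single (7 :: 1 :: 4 :: t) (1:k) from rfl, TS1 k 6]; rfl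
  | 1 :: 5 :: t => rw [show step k 0 (1 :: 5 :: t) = Finsupp.single (0 :: 1 :: 5 :: t) (1:k) from rfl, TS1 k 3]; rw [show step k 7 (1 :: 5 :: t) = Finsupp.single (7 :: 1 :: 5 :: t) (1:k) from rfl, TS1 k 6]; rfl
  | 1 :: 6 :: t => rw [show step k 0 (1 :: 6 :: t) = Finsupp.single (0 :: 1 :: 6 :: t) (1:k) from rfl, TS1 k 3]; rw [show step k 7 (1 :: 6 :: t) = Finsupp.single (7 :: 1 :: 6 :: t) (1:k) from rfl, TS1 k 6]; rfl
  | 1 :: 7 :: t => rw [show step k 0 (1 :: 7 :: t) = Finsupp.single (0 :: 1 :: 7 :: t) (1:k) from rfl, TS1 k 3]; rw [show step k 7 (1 :: 7 :: t) = Finsupp.single (7 :: 1 :: 7 :: t) (1:k) from rfl, TS1 k 6]; rfl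
  | 2 :: t => rw [show step k 0 (2 :: t) = Finsupp.single (0 :: 2 :: t) (1:k) from rfl, TS1 k 3]; rw [show step k 7 (2 :: t) = Finsupp.single (7 :: 2 :: t) (1:k) from rfl, TS1 k 6]; rfl
  | 3 :: t => rw [show step k 0 (3 :: t) = Finsupp.single (0 :: 3 :: t) (1:k) from rfl, TS1 k 3]; rw [show step k 7 (3 :: t) = Finsupp.single (7 :: 3 :: t) (1:k) from rfl, TS1 k 6]; rfl
  | 4 :: t => rw [show step k 0 (4 :: t) = (0 : B k) from rfl, map_zero (T k 3)]; rw [show step k 7 (4 :: t) = Finsupp.single (7 :: 4 :: t) (1:k) from rfl, TS1 k 6]; rfl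
  | 5 :: t => rw [show step k 0 (5 :: t) = Finsupp.single (0 :: 5 :: t) (1:k) from rfl, TS1 k 3]; rw [show step k 7 (5 :: t) = Finsupp.single (7 :: 5 :: t) (1:k) from rfl, TS1 k 6]; rfl
  | 6 :: t => rw [show step k 0 (6 :: t) = Finsupp.single (0 :: 6 :: t) (1:k) from rfl, TS1 k 3]; rw [show step k 7 (6 :: t) = Finsupp.single (7 :: 6 :: t) (1:k) from rfl, TS1 k 6]; rfl
  | 7 :: t => rw [show step k 0 (7 :: t) = Finsupp.single (0 :: 7 :: t) (1:k) from rfl, TS1 k 3]; rw [show step k 7 (7 :: t) = Finsupp.single (7 :: 7 :: t) (1:k) from rfl, TS1 k 6]; rfl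

lemma relAE_pt (v : List (Fin 8)) : T k 0 (step k 4 v) = 0 := by
  match v with
  | [] => rw [show step k 4 [] = Finsupp.single [4] (1:k) from rfl, TS1 k 0]; rfl
  | 0 :: t => rw [show step k 4 (0 :: t) = Finsupp.single (4 :: 0 :: t) (1:k) from rfl, TS1 k 0]; rfl
  | 1 :: t => rw [show step k 4 (1 :: t) = Finsupp.single (4 :: 1 :: t) (1:k) from rfl, TS1 k 0]; rfl
  | 2 :: t => rw [show step k 4 (2 :: t) = Finsupp.single (4 :: 2 :: t) (1:k) from rfl, TS1 k 0]; rfl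
  | 3 :: t => rw [show step k 4 (3 :: t) = Finsupp.single (4 :: 3 :: t) (1:k) from rfl, TS1 k 0]; rfl
  | 4 :: t => rw [show step k 4 (4 :: t) = Finsupp.single (4 :: 4 :: t) (1:k) from rfl, TS1 k 0]; rfl
  | [5] => rw [show step k 4 [5] = Finsupp.single [1, 2] (1:k) from rfl, TS1 k 0]; rfl
  | 5 :: 0 :: t => rw [show step k 4 (5 :: 0 :: t) = Finsupp.single (1 :: 2 :: 0 :: t) (1:k) from rfl, TS1 k 0]; rfl
  | 5 :: 1 :: t => rw [show step k 4 (5 :: 1 :: t) = Finsupp.single (1 :: 2 :: 1 :: t) (1:k) from rfl, TS1 k 0]; rfl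
  | 5 :: 2 :: t => rw [show step k 4 (5 :: 2 :: t) = Finsupp.single (1 :: 2 :: 2 :: t) (1:k) from rfl, TS1 k 0]; rfl
  | [5, 3] => rw [show step k 4 [5, 3] = Finsupp.single [1, 2, 3] (1:k) from rfl, TS1 k 0]; rfl
  | 5 :: 3 :: 0 :: t => rw [show step k 4 (5 :: 3 :: 0 :: t) = (0 : B k) from rfl, map_zero (T k 0)]
  | 5 :: 3 :: 1 :: t => rw [show step k 4 (5 :: 3 :: 1 :: t) = Finsupp.single (1 :: 2 :: 3 :: 1 :: t) (1:k) from rfl, TS1 k 0]; rfl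
  | 5 :: 3 :: 2 :: t => rw [show step k 4 (5 :: 3 :: 2 :: t) = Finsupp.single (1 :: 2 :: 3 :: 2 :: t) (1:k) from rfl, TS1 k 0]; rfl
  | 5 :: 3 :: 3 :: t => rw [show step k 4 (5 :: 3 :: 3 :: t) = Finsupp.single (1 :: 2 :: 3 :: 3 :: t) (1:k) from rfl, TS1 k 0]; rfl
  | 5 :: 3 :: 4 :: t => rw [show step k 4 (5 :: 3 :: 4 :: t) = Finsupp.single (1 :: 2 :: 3 :: 4 :: t) (1:k) from rfl, TS1 k 0]; rfl
  | 5 :: 3 :: 5 :: t => rw [show step k 4 (5 :: 3 :: 5 :: t) = Finsupp.single (1 :: 2 :: 3 :: 5 :: t) (1:k) from rfl, TS1 k 0]; rfl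
  | 5 :: 3 :: 6 :: t => rw [show step k 4 (5 :: 3 :: 6 :: t) = Finsupp.single (1 :: 2 :: 3 :: 6 :: t) (1:k) from rfl, TS1 k 0]; rfl
  | 5 :: 3 :: 7 :: t => rw [show step k 4 (5 :: 3 :: 7 :: t) = Finsupp.single (1 :: 2 :: 3 :: 7 :: t) (1:k) from rfl, TS1 k 0]; rfl
  | 5 :: 4 :: t => rw [show step k 4 (5 :: 4 :: t) = Finsupp.single (1 :: 2 :: 4 :: t) (1:k) from rfl, TS1 k 0]; rfl
  | 5 :: 5 :: t => rw [show step k 4 (5 :: 5 :: t) = Finsupp.single (1 :: 2 :: 5 :: t) (1:k) from rfl, TS1 k 0]; rfl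
  | 5 :: 6 :: t => rw [show step k 4 (5 :: 6 :: t) = (0 : B k) from rfl, map_zero (T k 0)]
  | 5 :: 7 :: t => rw [show step k 4 (5 :: 7 :: t) = Finsupp.single (1 :: 2 :: 7 :: t) (1:k) from rfl, TS1 k 0]; rfl
  | 6 :: t => rw [show step k 4 (6 :: t) = Finsupp.single (4 :: 6 :: t) (1:k) from rfl, TS1 k 0]; rfl
  | 7 :: t => rw [show step k 4 (7 :: t) = Finsupp.single (4 :: 7 :: t) (1:k) from rfl, TS1 k 0]; rfl

lemma relCL_pt (v : List (Fin 8)) : T k 2 (step k 6 v) = 0 := by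
  match v with
  | [] => rw [show step k 6 [] = Finsupp.single [6] (1:k) from rfl, TS1 k 2]; rfl
  | 0 :: t => rw [show step k 6 (0 :: t) = Finsupp.single (6 :: 0 :: t) (1:k) from rfl, TS1 k 2]; rfl
  | 1 :: t => rw [show step k 6 (1 :: t) = Finsupp.single (6 :: 1 :: t) (1:k) from rfl, TS1 k 2]; rfl
  | 2 :: t => rw [show step k 6 (2 :: t) = Finsupp.single (6 :: 2 :: t) (1:k) from rfl, TS1 k 2]; rfl
  | 3 :: t => rw [show step k 6 (3 :: t) = Finsupp.single (6 :: 3 :: t) (1:k) from rfl, TS1 k 2]; rfl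
  | 4 :: t => rw [show step k 6 (4 :: t) = Finsupp.single (6 :: 4 :: t) (1:k) from rfl, TS1 k 2]; rfl
  | 5 :: t => rw [show step k 6 (5 :: t) = Finsupp.single (6 :: 5 :: t) (1:k) from rfl, TS1 k 2]; rfl
  | 6 :: t => rw [show step k 6 (6 :: t) = Finsupp.single (6 :: 6 :: t) (1:k) from rfl, TS1 k 2]; rfl
  | [7] => rw [show step k 6 [7] = Finsupp.single [3, 0] (1:k) from rfl, TS1 k 2]; rfl
  | 7 :: 0 :: t => rw [show step k 6 (7 :: 0 :: t) = Finsupp.single (3 :: 0 :: 0 :: t) (1:k) from rfl, TS1 k 2]; rfl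
  | [7, 1] => rw [show step k 6 [7, 1] = Finsupp.single [3, 0, 1] (1:k) from rfl, TS1 k 2]; rfl
  | 7 :: 1 :: 0 :: t => rw [show step k 6 (7 :: 1 :: 0 :: t) = Finsupp.single (3 :: 0 :: 1 :: 0 :: t) (1:k) from rfl, TS1 k 2]; rfl
  | 7 :: 1 :: 1 :: t => rw [show step k 6 (7 :: 1 :: 1 :: t) = Finsupp.single (3 :: 0 :: 1 :: 1 :: t) (1:k) from rfl, TS1 k 2]; rfl
  | 7 :: 1 :: 2 :: t => rw [show step k 6 (7 :: 1 :: 2 :: t) = (0 : B k) from rfl, map_zero (T k 2)]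
  | 7 :: 1 :: 3 :: t => rw [show step k 6 (7 :: 1 :: 3 :: t) = Finsupp.single (3 :: 0 :: 1 :: 3 :: t) (1:k) from rfl, TS1 k 2]; rfl
  | 7 :: 1 :: 4 :: t => rw [show step k 6 (7 :: 1 :: 4 :: t) = Finsupp.single (3 :: 0 :: 1 :: 4 :: t) (1:k) from rfl, TS1 k 2]; rfl
  | 7 :: 1 :: 5 :: t => rw [show step k 6 (7 :: 1 :: 5 :: t) = Finsupp.single (3 :: 0 :: 1 :: 5 :: t) (1:k) from rfl, TS1 k 2]; rfl
  | 7 :: 1 :: 6 :: t => rw [show step k 6 (7 :: 1 :: 6 :: t) = Finsupp.single (3 :: 0 :: 1 :: 6 :: t) (1:k) from rfl, TS1 k 2]; rfl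
  | 7 :: 1 :: 7 :: t => rw [show step k 6 (7 :: 1 :: 7 :: t) = Finsupp.single (3 :: 0 :: 1 :: 7 :: t) (1:k) from rfl, TS1 k 2]; rfl
  | 7 :: 2 :: t => rw [show step k 6 (7 :: 2 :: t) = Finsupp.single (3 :: 0 :: 2 :: t) (1:k) from rfl, TS1 k 2]; rfl
  | 7 :: 3 :: t => rw [show step k 6 (7 :: 3 :: t) = Finsupp.single (3 :: 0 :: 3 :: t) (1:k) from rfl, TS1 k 2]; rfl
  | 7 :: 4 :: t => rw [show step k 6 (7 :: 4 :: t) = (0 : B k) from rfl, map_zero (T k 2)]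
  | 7 :: 5 :: t => rw [show step k 6 (7 :: 5 :: t) = Finsupp.single (3 :: 0 :: 5 :: t) (1:k) from rfl, TS1 k 2]; rfl
  | 7 :: 6 :: t => rw [show step k 6 (7 :: 6 :: t) = Finsupp.single (3 :: 0 :: 6 :: t) (1:k) from rfl, TS1 k 2]; rfl
  | 7 :: 7 :: t => rw [show step k 6 (7 :: 7 :: t) = Finsupp.single (3 :: 0 :: 7 :: t) (1:k) from rfl, TS1 k 2]; rfl

lemma step_cases (i : Fin 8) (v : List (Fin 8)) :
    step k i v = 0 ∨ step k i v = Finsupp.single (i :: v) 1 ∨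
    (i = 4 ∧ ∃ t, v = 5 :: t ∧ step k i v = Finsupp.single (1 :: 2 :: t) 1) ∨
    (i = 6 ∧ ∃ t, v = 7 :: t ∧ step k i v = Finsupp.single (3 :: 0 :: t) 1) := by
  match i, v with
  | 0, [] => exact Or.inr (Or.inl rfl)
  | 0, 0 :: t => exact Or.inr (Or.inl rfl)
  | 0, [1] => exact Or.inr (Or.inl rfl)
  | 0, 1 :: 0 :: t => exact Or.inr (Or.inl rfl)
  | 0, 1 :: 1 :: t => exact Or.inr (Or.inl rfl)
  | 0, 1 :: 2 :: t => exact Or.inl rfl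
  | 0, 1 :: 3 :: t => exact Or.inr (Or.inl rfl)
  | 0, 1 :: 4 :: t => exact Or.inr (Or.inl rfl)
  | 0, 1 :: 5 :: t => exact Or.inr (Or.inl rfl)
  | 0, 1 :: 6 :: t => exact Or.inr (Or.inl rfl)
  | 0, 1 :: 7 :: t => exact Or.inr (Or.inl rfl)
  | 0, 2 :: t => exact Or.inr (Or.inl rfl)
  | 0, 3 :: t => exact Or.inr (Or.inl rfl)
  | 0, 4 :: t => exact Or.inl rfl
  | 0, 5 :: t => exact Or.inr (Or.inl rfl)
  | 0, 6 :: t => exact Or.inr (Or.inl rfl)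
  | 0, 7 :: t => exact Or.inr (Or.inl rfl)
  | 1, t => exact Or.inr (Or.inl rfl)
  | 2, [] => exact Or.inr (Or.inl rfl)
  | 2, 0 :: t => exact Or.inr (Or.inl rfl)
  | 2, 1 :: t => exact Or.inr (Or.inl rfl)
  | 2, 2 :: t => exact Or.inr (Or.inl rfl)
  | 2, [3] => exact Or.inr (Or.inl rfl)
  | 2, 3 :: 0 :: t => exact Or.inl rfl
  | 2, 3 :: 1 :: t => exact Or.inr (Or.inl rfl)
  | 2, 3 :: 2 :: t => exact Or.inr (Or.inl rfl)
  | 2, 3 :: 3 :: t => exact Or.inr (Or.inl rfl)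
  | 2, 3 :: 4 :: t => exact Or.inr (Or.inl rfl)
  | 2, 3 :: 5 :: t => exact Or.inr (Or.inl rfl)
  | 2, 3 :: 6 :: t => exact Or.inr (Or.inl rfl)
  | 2, 3 :: 7 :: t => exact Or.inr (Or.inl rfl)
  | 2, 4 :: t => exact Or.inr (Or.inl rfl)
  | 2, 5 :: t => exact Or.inr (Or.inl rfl)
  | 2, 6 :: t => exact Or.inl rfl
  | 2, 7 :: t => exact Or.inr (Or.inl rfl)
  | 3, t => exact Or.inr (Or.inl rfl)
  | 4, [] => exact Or.inr (Or.inl rfl)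
  | 4, 0 :: t => exact Or.inr (Or.inl rfl)
  | 4, 1 :: t => exact Or.inr (Or.inl rfl)
  | 4, 2 :: t => exact Or.inr (Or.inl rfl)
  | 4, 3 :: t => exact Or.inr (Or.inl rfl)
  | 4, 4 :: t => exact Or.inr (Or.inl rfl)
  | 4, [5] => exact Or.inr (Or.inr (Or.inl ⟨rfl, [], rfl, rfl⟩))
  | 4, 5 :: 0 :: t => exact Or.inr (Or.inr (Or.inl ⟨rfl, 0 :: t, rfl, rfl⟩))
  | 4, 5 :: 1 :: t => exact Or.inr (Or.inr (Or.inl ⟨rfl, 1 :: t, rfl, rfl⟩))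
  | 4, 5 :: 2 :: t => exact Or.inr (Or.inr (Or.inl ⟨rfl, 2 :: t, rfl, rfl⟩))
  | 4, [5, 3] => exact Or.inr (Or.inr (Or.inl ⟨rfl, [3], rfl, rfl⟩))
  | 4, 5 :: 3 :: 0 :: t => exact Or.inl rfl
  | 4, 5 :: 3 :: 1 :: t => exact Or.inr (Or.inr (Or.inl ⟨rfl, 3 :: 1 :: t, rfl, rfl⟩))
  | 4, 5 :: 3 :: 2 :: t => exact Or.inr (Or.inr (Or.inl ⟨rfl, 3 :: 2 :: t, rfl, rfl⟩))
  | 4, 5 :: 3 :: 3 :: t => exact Or.inr (Or.inr (Or.inl ⟨rfl, 3 :: 3 :: t, rfl, rfl⟩))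
  | 4, 5 :: 3 :: 4 :: t => exact Or.inr (Or.inr (Or.inl ⟨rfl, 3 :: 4 :: t, rfl, rfl⟩))
  | 4, 5 :: 3 :: 5 :: t => exact Or.inr (Or.inr (Or.inl ⟨rfl, 3 :: 5 :: t, rfl, rfl⟩))
  | 4, 5 :: 3 :: 6 :: t => exact Or.inr (Or.inr (Or.inl ⟨rfl, 3 :: 6 :: t, rfl, rfl⟩))
  | 4, 5 :: 3 :: 7 :: t => exact Or.inr (Or.inr (Or.inl ⟨rfl, 3 :: 7 :: t, rfl, rfl⟩))
  | 4, 5 :: 4 :: t => exact Or.inr (Or.inr (Or.inl ⟨rfl, 4 :: t, rfl, rfl⟩))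
  | 4, 5 :: 5 :: t => exact Or.inr (Or.inr (Or.inl ⟨rfl, 5 :: t, rfl, rfl⟩))
  | 4, 5 :: 6 :: t => exact Or.inl rfl
  | 4, 5 :: 7 :: t => exact Or.inr (Or.inr (Or.inl ⟨rfl, 7 :: t, rfl, rfl⟩))
  | 4, 6 :: t => exact Or.inr (Or.inl rfl)
  | 4, 7 :: t => exact Or.inr (Or.inl rfl)
  | 5, t => exact Or.inr (Or.inl rfl)
  | 6, [] => exact Or.inr (Or.inl rfl)
  | 6, 0 :: t => exact Or.inr (Or.inl rfl)
  | 6, 1 :: t => exact Or.inr (Or.inl rfl)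
  | 6, 2 :: t => exact Or.inr (Or.inl rfl)
  | 6, 3 :: t => exact Or.inr (Or.inl rfl)
  | 6, 4 :: t => exact Or.inr (Or.inl rfl)
  | 6, 5 :: t => exact Or.inr (Or.inl rfl)
  | 6, 6 :: t => exact Or.inr (Or.inl rfl)
  | 6, [7] => exact Or.inr (Or.inr (Or.inr ⟨rfl, [], rfl, rfl⟩))
  | 6, 7 :: 0 :: t => exact Or.inr (Or.inr (Or.inr ⟨rfl, 0 :: t, rfl, rfl⟩))
  | 6, [7, 1] => exact Or.inr (Or.inr (Or.inr ⟨rfl, [1], rfl, rfl⟩))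
  | 6, 7 :: 1 :: 0 :: t => exact Or.inr (Or.inr (Or.inr ⟨rfl, 1 :: 0 :: t, rfl, rfl⟩))
  | 6, 7 :: 1 :: 1 :: t => exact Or.inr (Or.inr (Or.inr ⟨rfl, 1 :: 1 :: t, rfl, rfl⟩))
  | 6, 7 :: 1 :: 2 :: t => exact Or.inl rfl
  | 6, 7 :: 1 :: 3 :: t => exact Or.inr (Or.inr (Or.inr ⟨rfl, 1 :: 3 :: t, rfl, rfl⟩))
  | 6, 7 :: 1 :: 4 :: t => exact Or.inr (Or.inr (Or.inr ⟨rfl, 1 :: 4 :: t, rfl, rfl⟩))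
  | 6, 7 :: 1 :: 5 :: t => exact Or.inr (Or.inr (Or.inr ⟨rfl, 1 :: 5 :: t, rfl, rfl⟩))
  | 6, 7 :: 1 :: 6 :: t => exact Or.inr (Or.inr (Or.inr ⟨rfl, 1 :: 6 :: t, rfl, rfl⟩))
  | 6, 7 :: 1 :: 7 :: t => exact Or.inr (Or.inr (Or.inr ⟨rfl, 1 :: 7 :: t, rfl, rfl⟩))
  | 6, 7 :: 2 :: t => exact Or.inr (Or.inr (Or.inr ⟨rfl, 2 :: t, rfl, rfl⟩))
  | 6, 7 :: 3 :: t => exact Or.inr (Or.inr (Or.inr ⟨rfl, 3 :: t, rfl, rfl⟩))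
  | 6, 7 :: 4 :: t => exact Or.inl rfl
  | 6, 7 :: 5 :: t => exact Or.inr (Or.inr (Or.inr ⟨rfl, 5 :: t, rfl, rfl⟩))
  | 6, 7 :: 6 :: t => exact Or.inr (Or.inr (Or.inr ⟨rfl, 6 :: t, rfl, rfl⟩))
  | 6, 7 :: 7 :: t => exact Or.inr (Or.inr (Or.inr ⟨rfl, 7 :: t, rfl, rfl⟩))
  | 7, t => exact Or.inr (Or.inl rfl)

lemma step_or (i : Fin 8) (v : List (Fin 8)) :
    step k i v = Finsupp.single (i :: v) 1 ∨
    ∃ u ∈ ([[4, 5], [0, 4], [6, 7], [2, 6], [0, 1, 2], [2, 3, 0]] : List (List (Fin 8))), u <:+: (i :: v) := by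
  match i, v with
  | 0, [] => exact Or.inl rfl
  | 0, 0 :: t => exact Or.inl rfl
  | 0, [1] => exact Or.inl rfl
  | 0, 1 :: 0 :: t => exact Or.inl rfl
  | 0, 1 :: 1 :: t => exact Or.inl rfl
  | 0, 1 :: 2 :: t => exact Or.inr ⟨[0, 1, 2], by decide, [], t, rfl⟩
  | 0, 1 :: 3 :: t => exact Or.inl rfl
  | 0, 1 :: 4 :: t => exact Or.inl rfl
  | 0, 1 :: 5 :: t => exact Or.inl rfl
  | 0, 1 :: 6 :: t => exact Or.inl rfl
  | 0, 1 :: 7 :: t => exact Or.inl rfl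
  | 0, 2 :: t => exact Or.inl rfl
  | 0, 3 :: t => exact Or.inl rfl
  | 0, 4 :: t => exact Or.inr ⟨[0, 4], by decide, [], t, rfl⟩
  | 0, 5 :: t => exact Or.inl rfl
  | 0, 6 :: t => exact Or.inl rfl
  | 0, 7 :: t => exact Or.inl rfl
  | 1, t => exact Or.inl rfl
  | 2, [] => exact Or.inl rfl
  | 2, 0 :: t => exact Or.inl rfl
  | 2, 1 :: t => exact Or.inl rfl
  | 2, 2 :: t => exact Or.inl rfl
  | 2, [3] => exact Or.inl rfl
  | 2, 3 :: 0 :: t => exact Or.inr ⟨[2, 3, 0], by decide, [], t, rfl⟩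
  | 2, 3 :: 1 :: t => exact Or.inl rfl
  | 2, 3 :: 2 :: t => exact Or.inl rfl
  | 2, 3 :: 3 :: t => exact Or.inl rfl
  | 2, 3 :: 4 :: t => exact Or.inl rfl
  | 2, 3 :: 5 :: t => exact Or.inl rfl
  | 2, 3 :: 6 :: t => exact Or.inl rfl
  | 2, 3 :: 7 :: t => exact Or.inl rfl
  | 2, 4 :: t => exact Or.inl rfl
  | 2, 5 :: t => exact Or.inl rfl
  | 2, 6 :: t => exact Or.inr ⟨[2, 6], by decide, [], t, rfl⟩
  | 2, 7 :: t => exact Or.inl rfl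
  | 3, t => exact Or.inl rfl
  | 4, [] => exact Or.inl rfl
  | 4, 0 :: t => exact Or.inl rfl
  | 4, 1 :: t => exact Or.inl rfl
  | 4, 2 :: t => exact Or.inl rfl
  | 4, 3 :: t => exact Or.inl rfl
  | 4, 4 :: t => exact Or.inl rfl
  | 4, [5] => exact Or.inr ⟨[4, 5], by decide, [], [], rfl⟩
  | 4, 5 :: 0 :: t => exact Or.inr ⟨[4, 5], by decide, [], 0 :: t, rfl⟩
  | 4, 5 :: 1 :: t => exact Or.inr ⟨[4, 5], by decide, [], 1 :: t, rfl⟩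
  | 4, 5 :: 2 :: t => exact Or.inr ⟨[4, 5], by decide, [], 2 :: t, rfl⟩
  | 4, [5, 3] => exact Or.inr ⟨[4, 5], by decide, [], [3], rfl⟩
  | 4, 5 :: 3 :: 0 :: t => exact Or.inr ⟨[4, 5], by decide, [], 3 :: 0 :: t, rfl⟩
  | 4, 5 :: 3 :: 1 :: t => exact Or.inr ⟨[4, 5], by decide, [], 3 :: 1 :: t, rfl⟩
  | 4, 5 :: 3 :: 2 :: t => exact Or.inr ⟨[4, 5], by decide, [], 3 :: 2 :: t, rfl⟩
  | 4, 5 :: 3 :: 3 :: t => exact Or.inr ⟨[4, 5], by decide, [], 3 :: 3 :: t, rfl⟩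
  | 4, 5 :: 3 :: 4 :: t => exact Or.inr ⟨[4, 5], by decide, [], 3 :: 4 :: t, rfl⟩
  | 4, 5 :: 3 :: 5 :: t => exact Or.inr ⟨[4, 5], by decide, [], 3 :: 5 :: t, rfl⟩
  | 4, 5 :: 3 :: 6 :: t => exact Or.inr ⟨[4, 5], by decide, [], 3 :: 6 :: t, rfl⟩
  | 4, 5 :: 3 :: 7 :: t => exact Or.inr ⟨[4, 5], by decide, [], 3 :: 7 :: t, rfl⟩
  | 4, 5 :: 4 :: t => exact Or.inr ⟨[4, 5], by decide, [], 4 :: t, rfl⟩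
  | 4, 5 :: 5 :: t => exact Or.inr ⟨[4, 5], by decide, [], 5 :: t, rfl⟩
  | 4, 5 :: 6 :: t => exact Or.inr ⟨[4, 5], by decide, [], 6 :: t, rfl⟩
  | 4, 5 :: 7 :: t => exact Or.inr ⟨[4, 5], by decide, [], 7 :: t, rfl⟩
  | 4, 6 :: t => exact Or.inl rfl
  | 4, 7 :: t => exact Or.inl rfl
  | 5, t => exact Or.inl rfl
  | 6, [] => exact Or.inl rfl
  | 6, 0 :: t => exact Or.inl rfl
  | 6, 1 :: t => exact Or.inl rfl
  | 6, 2 :: t => exact Or.inl rfl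
  | 6, 3 :: t => exact Or.inl rfl
  | 6, 4 :: t => exact Or.inl rfl
  | 6, 5 :: t => exact Or.inl rfl
  | 6, 6 :: t => exact Or.inl rfl
  | 6, [7] => exact Or.inr ⟨[6, 7], by decide, [], [], rfl⟩
  | 6, 7 :: 0 :: t => exact Or.inr ⟨[6, 7], by decide, [], 0 :: t, rfl⟩
  | 6, [7, 1] => exact Or.inr ⟨[6, 7], by decide, [], [1], rfl⟩
  | 6, 7 :: 1 :: 0 :: t => exact Or.inr ⟨[6, 7], by decide, [], 1 :: 0 :: t, rfl⟩
  | 6, 7 :: 1 :: 1 :: t => exact Or.inr ⟨[6, 7], by decide, [], 1 :: 1 :: t, rfl⟩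
  | 6, 7 :: 1 :: 2 :: t => exact Or.inr ⟨[6, 7], by decide, [], 1 :: 2 :: t, rfl⟩
  | 6, 7 :: 1 :: 3 :: t => exact Or.inr ⟨[6, 7], by decide, [], 1 :: 3 :: t, rfl⟩
  | 6, 7 :: 1 :: 4 :: t => exact Or.inr ⟨[6, 7], by decide, [], 1 :: 4 :: t, rfl⟩
  | 6, 7 :: 1 :: 5 :: t => exact Or.inr ⟨[6, 7], by decide, [], 1 :: 5 :: t, rfl⟩
  | 6, 7 :: 1 :: 6 :: t => exact Or.inr ⟨[6, 7], by decide, [], 1 :: 6 :: t, rfl⟩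
  | 6, 7 :: 1 :: 7 :: t => exact Or.inr ⟨[6, 7], by decide, [], 1 :: 7 :: t, rfl⟩
  | 6, 7 :: 2 :: t => exact Or.inr ⟨[6, 7], by decide, [], 2 :: t, rfl⟩
  | 6, 7 :: 3 :: t => exact Or.inr ⟨[6, 7], by decide, [], 3 :: t, rfl⟩
  | 6, 7 :: 4 :: t => exact Or.inr ⟨[6, 7], by decide, [], 4 :: t, rfl⟩
  | 6, 7 :: 5 :: t => exact Or.inr ⟨[6, 7], by decide, [], 5 :: t, rfl⟩
  | 6, 7 :: 6 :: t => exact Or.inr ⟨[6, 7], by decide, [], 6 :: t, rfl⟩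
  | 6, 7 :: 7 :: t => exact Or.inr ⟨[6, 7], by decide, [], 7 :: t, rfl⟩
  | 7, t => exact Or.inl rfl


lemma relBC_op : (T k 1) * (T k 2) = (T k 4) * (T k 5) := by
  apply Finsupp.lhom_ext
  intro v c
  simp only [Module.End.mul_apply, T_single, map_smul, relBC_pt]

lemma relDA_op : (T k 3) * (T k 0) = (T k 6) * (T k 7) := by
  apply Finsupp.lhom_ext
  intro v c
  simp only [Module.End.mul_apply, T_single, map_smul, relDA_pt]

lemma relAE_op : (T k 0) * (T k 4) = 0 := by
  apply Finsupp.lhom_ext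
  intro v c
  simp only [Module.End.mul_apply, T_single, map_smul, relAE_pt, smul_zero,
    LinearMap.zero_apply]

lemma relCL_op : (T k 2) * (T k 6) = 0 := by
  apply Finsupp.lhom_ext
  intro v c
  simp only [Module.End.mul_apply, T_single, map_smul, relCL_pt, smul_zero,
    LinearMap.zero_apply]

def gens : Set (FreeAlgebra k (Fin 8)) :=
  { FreeMonomial k [1, 2] - FreeMonomial k [4, 5],
    FreeMonomial k [0, 4],
    FreeMonomial k [3, 0] - FreeMonomial k [6, 7],
    FreeMonomial k [2, 6] }

def rho : FreeAlgebra k (Fin 8) →ₐ[k] Module.End k (B k) :=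
  FreeAlgebra.lift k (T k)

lemma rho_ι (i : Fin 8) : rho k (FreeAlgebra.ι k i) = T k i :=
  FreeAlgebra.lift_ι_apply _ _

lemma rho_mono_cons (i : Fin 8) (w : List (Fin 8)) :
    rho k (FreeMonomial k (i :: w)) = T k i * rho k (FreeMonomial k w) := by
  rw [show FreeMonomial k (i :: w) = FreeAlgebra.ι k i * FreeMonomial k w from by
        rw [FreeMonomial, FreeMonomial, List.map_cons, List.prod_cons],
      map_mul, rho_ι]

lemma rho_mono2 (i j : Fin 8) :
    rho k (FreeMonomial k [i, j]) = T k i * T k j := by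
  rw [rho_mono_cons, rho_mono_cons,
    show FreeMonomial k ([] : List (Fin 8)) = 1 from rfl, map_one, mul_one]

lemma rho_gens {g : FreeAlgebra k (Fin 8)} (hg : g ∈ gens k) : rho k g = 0 := by
  simp only [gens, Set.mem_insert_iff, Set.mem_singleton_iff] at hg
  rcases hg with rfl | rfl | rfl | rfl
  · rw [map_sub, rho_mono2, rho_mono2, relBC_op, sub_self]
  · rw [rho_mono2, relAE_op]
  · rw [map_sub, rho_mono2, rho_mono2, relDA_op, sub_self]
  · rw [rho_mono2, relCL_op]

lemma rho_span {f : FreeAlgebra k (Fin 8)} (hf : f ∈ twoSidedSpan k (gens k)) :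
    rho k f = 0 := by
  refine Submodule.span_induction ?_ ?_ ?_ ?_ hf
  · rintro x ⟨a, g, b, hg, rfl⟩
    rw [map_mul, map_mul, rho_gens k hg, mul_zero, zero_mul]
  · exact map_zero _
  · intro x y _ _ hx hy; rw [map_add, hx, hy, add_zero]
  · intro a x _ hx; rw [map_smul, hx, smul_zero]

def NF (f : FreeAlgebra k (Fin 8)) : B k := rho k f (Finsupp.single [] 1)

lemma NF_one : NF k 1 = Finsupp.single [] 1 := by
  rw [NF, map_one, Module.End.one_apply]

lemma NF_mono_cons (i : Fin 8) (w : List (Fin 8)) :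
    NF k (FreeMonomial k (i :: w)) = T k i (NF k (FreeMonomial k w)) := by
  rw [NF, NF, rho_mono_cons, Module.End.mul_apply]

lemma NF_span {f : FreeAlgebra k (Fin 8)} (hf : f ∈ twoSidedSpan k (gens k)) :
    NF k f = 0 := by
  rw [NF, rho_span k hf]; rfl

lemma NF_mono_normal (w : List (Fin 8))
    (h : ∀ u ∈ ([[4, 5], [0, 4], [6, 7], [2, 6], [0, 1, 2], [2, 3, 0]] :
      List (List (Fin 8))), ¬ u <:+: w) :
    NF k (FreeMonomial k w) = Finsupp.single w 1 := by
  induction w with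
  | nil => exact NF_one k
  | cons i t ih =>
    rw [NF_mono_cons,
      ih (fun u hu hinf => h u hu (hinf.trans (List.suffix_cons i t).isInfix)), TS1]
    rcases step_or k i t with h1 | ⟨u, hu, hinf⟩
    · exact h1
    · exact absurd hinf (h u hu)

lemma step_bound (i : Fin 8) (w v : List (Fin 8)) (h : (step k i w) v ≠ 0) :
    v = i :: w ∨ DegLexLT v (i :: w) := by
  rcases step_cases k i w with h0 | h1 | ⟨hi, t, hw, hs⟩ | ⟨hi, t, hw, hs⟩
  · rw [h0] at h; simp at h
  · rw [h1] at h; left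
    by_contra hne; exact h (Finsupp.single_eq_of_ne' (Ne.symm hne))
  · subst hi; subst hw
    rw [hs] at h
    have hv : v = 1 :: 2 :: t := by
      by_contra hne; exact h (Finsupp.single_eq_of_ne' (Ne.symm hne))
    subst hv
    exact Or.inr (Or.inr ⟨by simp, List.Lex.rel (by decide)⟩)
  · subst hi; subst hw
    rw [hs] at h
    have hv : v = 3 :: 0 :: t := by
      by_contra hne; exact h (Finsupp.single_eq_of_ne' (Ne.symm hne))
    subst hv
    exact Or.inr (Or.inr ⟨by simp, List.Lex.rel (by decide)⟩)

lemma NF_support (u : List (Fin 8)) :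
    ∀ v, NF k (FreeMonomial k u) v ≠ 0 → v = u ∨ DegLexLT v u := by
  induction u with
  | nil =>
    intro v hv; left
    rw [show FreeMonomial k ([] : List (Fin 8)) = 1 from rfl, NF_one] at hv
    by_contra hne; exact hv (Finsupp.single_eq_of_ne' (Ne.symm hne))
  | cons i t ih =>
    intro v hv
    rw [NF_mono_cons, T, Finsupp.linearCombination_apply, Finsupp.sum,
      Finsupp.finset_sum_apply] at hv
    obtain ⟨w, hw, hne⟩ := Finset.exists_ne_zero_of_sum_ne_zero hv
    have hsw : (step k i w) v ≠ 0 := by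
      intro h0; apply hne; rw [Finsupp.smul_apply, h0, smul_zero]
    have hwb := step_bound k i w v hsw
    have hwt : w = t ∨ DegLexLT w t := ih w (Finsupp.mem_support_iff.mp hw)
    rcases hwt with rfl | hlt
    · exact hwb
    · rcases hwb with rfl | hlt2
      · exact Or.inr (deglex_cons i hlt)
      · exact Or.inr (deglex_trans hlt2 (deglex_cons i hlt))

/-! ### The equivalence with the monoid algebra -/

abbrev EE : FreeAlgebra k (Fin 8) ≃ₐ[k] MonoidAlgebra k (FreeMonoid (Fin 8)) :=
  FreeAlgebra.equivMonoidAlgebraFreeMonoid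

lemma EE_ι (i : Fin 8) :
    EE k (FreeAlgebra.ι k i) = MonoidAlgebra.single (FreeMonoid.of i) 1 := by
  simp [EE, FreeAlgebra.equivMonoidAlgebraFreeMonoid, MonoidAlgebra.of_apply]

lemma E_mono (w : List (Fin 8)) :
    EE k (FreeMonomial k w) = MonoidAlgebra.single (FreeMonoid.ofList w) 1 := by
  induction w with
  | nil =>
    rw [show FreeMonomial k ([] : List (Fin 8)) = 1 from rfl, map_one,
      MonoidAlgebra.one_def]
    rfl
  | cons i t ih =>
    rw [show FreeMonomial k (i :: t) = FreeAlgebra.ι k i * FreeMonomial k t from by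
          rw [FreeMonomial, FreeMonomial, List.map_cons, List.prod_cons],
      map_mul, ih, EE_ι, MonoidAlgebra.single_mul_single, one_mul]
    rfl

lemma coeff_toList (f : FreeAlgebra k (Fin 8)) (m : FreeMonoid (Fin 8)) :
    coeffWord k f m.toList = (EE k f).coeff m := by
  rw [coeffWord, FreeMonoid.ofList_toList]

lemma decomp (f : FreeAlgebra k (Fin 8)) :
    f = (EE k f).coeff.sum fun m c => c • FreeMonomial k m.toList := by
  apply (EE k).injective
  rw [map_finsuppSum]
  conv_lhs => rw [← MonoidAlgebra.sum_coeff_single (EE k f)]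
  simp only [map_smul, E_mono, FreeMonoid.ofList_toList, MonoidAlgebra.smul_single',
    Finsupp.smul_single', mul_one]

lemma NF_decomp (f : FreeAlgebra k (Fin 8)) :
    NF k f = (EE k f).coeff.sum fun m c => c • NF k (FreeMonomial k m.toList) := by
  conv_lhs => rw [NF, decomp k f]
  rw [map_finsuppSum, Finsupp.sum, Finsupp.sum, LinearMap.sum_apply]
  simp only [map_smul, LinearMap.smul_apply, NF]

lemma forward {f : FreeAlgebra k (Fin 8)} {w : List (Fin 8)}
    (hf : f ∈ twoSidedSpan k (gens k)) (hlead : IsLeadWord k f w)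
    (hnorm : ∀ u ∈ ([[4, 5], [0, 4], [6, 7], [2, 6], [0, 1, 2], [2, 3, 0]] :
      List (List (Fin 8))), ¬ u <:+: w) : False := by
  have h0 : NF k f = 0 := NF_span k hf
  have h1 := NF_decomp k f
  rw [h0] at h1
  have h2 : (0 : k) =
      (EE k f).coeff.sum fun m c => (c • NF k (FreeMonomial k m.toList)) w := by
    have := congrArg (fun x : B k => x w) h1
    simpa [Finsupp.sum, Finsupp.finset_sum_apply] using this
  rw [Finsupp.sum_eq_single (FreeMonoid.ofList w)
      (fun m hm hmne => ?_) (fun _ => by rw [zero_smul, Finsupp.zero_apply])] at h2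
  · rw [Finsupp.smul_apply, ← coeff_toList, FreeMonoid.toList_ofList,
      NF_mono_normal k w hnorm, Finsupp.single_eq_same, smul_eq_mul, mul_one] at h2
    exact hlead.1 h2.symm
  · -- m ≠ ofList w, coefficient nonzero: show the term vanishes
    rw [Finsupp.smul_apply]
    have hcm : coeffWord k f m.toList ≠ 0 := by rw [coeff_toList]; exact hm
    rcases hlead.2 m.toList hcm with he | hlt
    · exact absurd (by rw [← he, FreeMonoid.ofList_toList]) hmne
    · have hz : NF k (FreeMonomial k m.toList) w = 0 := by
        by_contra hnz
        rcases NF_support k m.toList w hnz with rfl | hlt2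
        · exact deglex_irrefl _ hlt
        · exact deglex_irrefl _ (deglex_trans hlt2 hlt)
      rw [hz, smul_zero]

/-! ### The reverse direction -/

lemma E_mul_mono_left (p : List (Fin 8)) (x : FreeAlgebra k (Fin 8)) :
    (EE k (FreeMonomial k p * x)).coeff =
      Finsupp.mapDomain (fun m => FreeMonoid.ofList p * m) (EE k x).coeff := by
  rw [map_mul, E_mono]
  generalize EE k x = Y
  induction Y using MonoidAlgebra.induction_linear with
  | zero => rw [mul_zero, MonoidAlgebra.coeff_zero, Finsupp.mapDomain_zero]
  | add f g hf hg => rw [mul_add, MonoidAlgebra.coeff_add, MonoidAlgebra.coeff_add, Finsupp.mapDomain_add, hf, hg]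
  | single a b =>
    rw [MonoidAlgebra.single_mul_single, one_mul, MonoidAlgebra.coeff_single,
      MonoidAlgebra.coeff_single, Finsupp.mapDomain_single]

lemma E_mul_mono_right (q : List (Fin 8)) (x : FreeAlgebra k (Fin 8)) :
    (EE k (x * FreeMonomial k q)).coeff =
      Finsupp.mapDomain (fun m => m * FreeMonoid.ofList q) (EE k x).coeff := by
  rw [map_mul, E_mono]
  generalize EE k x = Y
  induction Y using MonoidAlgebra.induction_linear with
  | zero => rw [zero_mul, MonoidAlgebra.coeff_zero, Finsupp.mapDomain_zero]
  | add f g hf hg => rw [add_mul, MonoidAlgebra.coeff_add, MonoidAlgebra.coeff_add, Finsupp.mapDomain_add, hf, hg]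
  | single a b =>
    rw [MonoidAlgebra.single_mul_single, mul_one, MonoidAlgebra.coeff_single,
      MonoidAlgebra.coeff_single, Finsupp.mapDomain_single]

lemma sand_inj (p q : List (Fin 8)) :
    Function.Injective
      (fun m => FreeMonoid.ofList p * m * FreeMonoid.ofList q :
        FreeMonoid (Fin 8) → FreeMonoid (Fin 8)) := by
  intro a b h
  exact mul_left_cancel (mul_right_cancel h)

lemma E_sand (p q : List (Fin 8)) (x : FreeAlgebra k (Fin 8)) :
    (EE k (FreeMonomial k p * x * FreeMonomial k q)).coeff =
      Finsupp.mapDomain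
        (fun m => FreeMonoid.ofList p * m * FreeMonoid.ofList q) (EE k x).coeff := by
  rw [mul_assoc, E_mul_mono_left, E_mul_mono_right, ← Finsupp.mapDomain_comp]
  congr 1
  funext m
  exact (mul_assoc _ _ _).symm

lemma coeff_sand (p q : List (Fin 8)) (x : FreeAlgebra k (Fin 8)) (v : List (Fin 8)) :
    coeffWord k (FreeMonomial k p * x * FreeMonomial k q) (p ++ v ++ q) =
      coeffWord k x v := by
  rw [coeffWord, coeffWord, E_sand,
    show FreeMonoid.ofList (p ++ v ++ q) =
        FreeMonoid.ofList p * FreeMonoid.ofList v * FreeMonoid.ofList q from by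
      rw [FreeMonoid.ofList_append, FreeMonoid.ofList_append],
    Finsupp.mapDomain_apply (sand_inj p q)]

lemma coeff_sand_ne (p q : List (Fin 8)) (x : FreeAlgebra k (Fin 8)) (u : List (Fin 8))
    (h : coeffWord k (FreeMonomial k p * x * FreeMonomial k q) u ≠ 0) :
    ∃ v, u = p ++ v ++ q ∧ coeffWord k x v ≠ 0 := by
  rw [coeffWord, E_sand] at h
  by_cases hr : FreeMonoid.ofList u ∈
      Set.range (fun m => FreeMonoid.ofList p * m * FreeMonoid.ofList q :
        FreeMonoid (Fin 8) → FreeMonoid (Fin 8))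
  · obtain ⟨m, hm⟩ := hr
    refine ⟨m.toList, ?_, ?_⟩
    · apply FreeMonoid.ofList.injective
      rw [FreeMonoid.ofList_append, FreeMonoid.ofList_append, FreeMonoid.ofList_toList]
      exact hm.symm
    · rw [coeff_toList]
      rw [← hm, Finsupp.mapDomain_apply (sand_inj p q)] at h
      exact h
  · exact absurd (Finsupp.mapDomain_notin_range _ _ hr) h

lemma lead_sand (p q : List (Fin 8)) {g : FreeAlgebra k (Fin 8)} {u : List (Fin 8)}
    (h : IsLeadWord k g u) :
    IsLeadWord k (FreeMonomial k p * g * FreeMonomial k q) (p ++ u ++ q) := by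
  constructor
  · rw [coeff_sand]; exact h.1
  · intro u' hu'
    obtain ⟨v, rfl, hv⟩ := coeff_sand_ne k p q g u' hu'
    rcases h.2 v hv with rfl | hlt
    · exact Or.inl rfl
    · exact Or.inr (deglex_append p q hlt)

lemma span_sand {x : FreeAlgebra k (Fin 8)} (hx : x ∈ twoSidedSpan k (gens k))
    (p q : List (Fin 8)) :
    FreeMonomial k p * x * FreeMonomial k q ∈ twoSidedSpan k (gens k) := by
  refine Submodule.span_induction ?_ ?_ ?_ ?_ hx
  · rintro y ⟨a, g, b, hg, rfl⟩
    apply Submodule.subset_span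
    exact ⟨FreeMonomial k p * a, g, b * FreeMonomial k q, hg, by
      simp only [mul_assoc]⟩
  · rw [mul_zero, zero_mul]; exact zero_mem _
  · intro a b _ _ ha hb
    rw [mul_add, add_mul]; exact add_mem ha hb
  · intro c a _ ha
    rw [mul_smul_comm, smul_mul_assoc]; exact Submodule.smul_mem _ _ ha

lemma lead_mono (w : List (Fin 8)) : IsLeadWord k (FreeMonomial k w) w := by
  constructor
  · rw [coeffWord, E_mono, MonoidAlgebra.coeff_single, Finsupp.single_eq_same]; exact one_ne_zero
  · intro u hu; left; by_contra hne
    apply hu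
    rw [coeffWord, E_mono, MonoidAlgebra.coeff_single]
    exact Finsupp.single_eq_of_ne'
      (fun h => hne (FreeMonoid.ofList.injective h).symm)

lemma lead_bin (w₁ w₂ : List (Fin 8)) (hne : w₁ ≠ w₂)
    (hlen : w₁.length = w₂.length) (hlex : List.Lex (· < ·) w₁ w₂) :
    IsLeadWord k (FreeMonomial k w₁ - FreeMonomial k w₂) w₂ := by
  have hcoeff : ∀ u : List (Fin 8),
      coeffWord k (FreeMonomial k w₁ - FreeMonomial k w₂) u =
        (Finsupp.single (FreeMonoid.ofList w₁) 1 : FreeMonoid (Fin 8) →₀ k)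
            (FreeMonoid.ofList u)
          - (Finsupp.single (FreeMonoid.ofList w₂) 1 :
              FreeMonoid (Fin 8) →₀ k) (FreeMonoid.ofList u) := by
    intro u
    rw [coeffWord, map_sub, E_mono, E_mono, MonoidAlgebra.coeff_sub, MonoidAlgebra.coeff_single,
      MonoidAlgebra.coeff_single, Finsupp.sub_apply]
  constructor
  · rw [hcoeff]
    rw [Finsupp.single_eq_of_ne' (fun h => hne (FreeMonoid.ofList.injective h)),
      Finsupp.single_eq_same, zero_sub]
    exact neg_ne_zero.mpr one_ne_zero
  · intro u hu
    by_cases h2 : u = w₂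
    · exact Or.inl h2
    by_cases h1 : u = w₁
    · subst h1; exact Or.inr (Or.inr ⟨hlen, hlex⟩)
    · exfalso
      apply hu
      rw [hcoeff,
        Finsupp.single_eq_of_ne' (fun h => h1 (FreeMonoid.ofList.injective h).symm),
        Finsupp.single_eq_of_ne' (fun h => h2 (FreeMonoid.ofList.injective h).symm),
        sub_zero]

lemma mem_g1 : FreeMonomial k [1, 2] - FreeMonomial k [4, 5] ∈ twoSidedSpan k (gens k) :=
  Submodule.subset_span ⟨1, _, 1, Or.inl rfl, by rw [one_mul, mul_one]⟩

lemma mem_g2 : FreeMonomial k [0, 4] ∈ twoSidedSpan k (gens k) :=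
  Submodule.subset_span ⟨1, _, 1, Or.inr (Or.inl rfl), by rw [one_mul, mul_one]⟩

lemma mem_g3 : FreeMonomial k [3, 0] - FreeMonomial k [6, 7] ∈ twoSidedSpan k (gens k) :=
  Submodule.subset_span ⟨1, _, 1, Or.inr (Or.inr (Or.inl rfl)), by rw [one_mul, mul_one]⟩

lemma mem_g4 : FreeMonomial k [2, 6] ∈ twoSidedSpan k (gens k) :=
  Submodule.subset_span ⟨1, _, 1, Or.inr (Or.inr (Or.inr rfl)), by rw [one_mul, mul_one]⟩

lemma mem_abc : FreeMonomial k [0, 1, 2] ∈ twoSidedSpan k (gens k) := by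
  have h : FreeMonomial k ([0, 1, 2] : List (Fin 8)) =
      FreeAlgebra.ι k 0 * (FreeMonomial k ([1, 2] : List (Fin 8))
          - FreeMonomial k ([4, 5] : List (Fin 8))) * 1
        + 1 * FreeMonomial k ([0, 4] : List (Fin 8)) * FreeAlgebra.ι k 5 := by
    simp only [FreeMonomial, List.map_cons, List.map_nil, List.prod_cons, List.prod_nil,
      mul_sub, sub_mul, one_mul, mul_one, mul_assoc]
    abel
  rw [h]
  exact add_mem (Submodule.subset_span ⟨_, _, _, Or.inl rfl, rfl⟩)
    (Submodule.subset_span ⟨_, _, _, Or.inr (Or.inl rfl), rfl⟩)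

lemma mem_cda : FreeMonomial k [2, 3, 0] ∈ twoSidedSpan k (gens k) := by
  have h : FreeMonomial k ([2, 3, 0] : List (Fin 8)) =
      FreeAlgebra.ι k 2 * (FreeMonomial k ([3, 0] : List (Fin 8))
          - FreeMonomial k ([6, 7] : List (Fin 8))) * 1
        + 1 * FreeMonomial k ([2, 6] : List (Fin 8)) * FreeAlgebra.ι k 7 := by
    simp only [FreeMonomial, List.map_cons, List.map_nil, List.prod_cons, List.prod_nil,
      mul_sub, sub_mul, one_mul, mul_one, mul_assoc]
    abel
  rw [h]
  exact add_mem (Submodule.subset_span ⟨_, _, _, Or.inr (Or.inr (Or.inl rfl)), rfl⟩)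
    (Submodule.subset_span ⟨_, _, _, Or.inr (Or.inr (Or.inr rfl)), rfl⟩)

lemma backward {u w : List (Fin 8)}
    (hu : u ∈ ([[4, 5], [0, 4], [6, 7], [2, 6], [0, 1, 2], [2, 3, 0]] :
      List (List (Fin 8)))) (hinf : u <:+: w) :
    ∃ f ∈ twoSidedSpan k (gens k), f ≠ 0 ∧ IsLeadWord k f w := by
  obtain ⟨s, t, rfl⟩ := hinf
  have key : ∃ g ∈ twoSidedSpan k (gens k), IsLeadWord k g u := by
    simp only [List.mem_cons, List.not_mem_nil, or_false] at hu
    rcases hu with rfl | rfl | rfl | rfl | rfl | rfl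
    · exact ⟨_, mem_g1 k, lead_bin k [1, 2] [4, 5] (by decide) rfl
        (List.Lex.rel (by decide))⟩
    · exact ⟨_, mem_g2 k, lead_mono k _⟩
    · exact ⟨_, mem_g3 k, lead_bin k [3, 0] [6, 7] (by decide) rfl
        (List.Lex.rel (by decide))⟩
    · exact ⟨_, mem_g4 k, lead_mono k _⟩
    · exact ⟨_, mem_abc k, lead_mono k _⟩
    · exact ⟨_, mem_cda k, lead_mono k _⟩
  obtain ⟨g, hgmem, hglead⟩ := key
  refine ⟨FreeMonomial k s * g * FreeMonomial k t, span_sand k hgmem s t, ?_,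
    lead_sand k s t hglead⟩
  intro h0
  have := (lead_sand k s t hglead).1
  rw [h0] at this
  exact this (by rw [coeffWord, map_zero]; rfl)

end Assoc15

/-- Let `A = k⟨a,b,c,d,e,f,l,m⟩/⟨bc−ef, ae, da−lm, cl⟩`, generators encoded as
`a = 0, …, f = 5, l = 6, m = 7 : Fin 8` with `a < b < ⋯ < m`, and deg-lex
order on monomials.  The set of leading words of the nonzero elements of the
defining ideal is exactly the set of words containing one of
`ef, ae, lm, cl, abc, cda` as a connected subword; equivalently, the
associated graded algebra of `A` under the induced filtration is the monomial
algebra `gr A ≅ k⟨a,…,m⟩/⟨ef, ae, lm, cl, abc, cda⟩`. -/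
theorem associated_graded_is_monomial_algebra (k : Type) [Field k] :
    ∀ w : List (Fin 8),
      (∃ f ∈ twoSidedSpan k
          ({ FreeMonomial k [1, 2] - FreeMonomial k [4, 5],  -- bc - ef
             FreeMonomial k [0, 4],                          -- ae
             FreeMonomial k [3, 0] - FreeMonomial k [6, 7],  -- da - lm
             FreeMonomial k [2, 6] } :                       -- cl
            Set (FreeAlgebra k (Fin 8))),
          f ≠ 0 ∧ IsLeadWord k f w) ↔
      (∃ u ∈ ([[4, 5], [0, 4], [6, 7], [2, 6], [0, 1, 2], [2, 3, 0]] :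
          List (List (Fin 8))), u <:+: w) := by
  intro w
  constructor
  · rintro ⟨f, hf, hne, hlead⟩
    by_contra hcon
    push_neg at hcon
    exact Assoc15.forward k (f := f) (w := w) hf hlead (by
      intro u hu
      exact hcon u hu)
  · rintro ⟨u, hu, hinf⟩
    exact Assoc15.backward k hu hinf
end
end
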